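/- arXiv:2007.11300 — 4 statements merged into one kernel-verified Lean document; each statement's English description precedes it below -/
import Mathlib

section
/- Let 0 < γ < 1 and −1/2 < ν ≤ 0. Then for all x > 0, ∫_0^x e^{−γt} t^ν I_ν(t) dt > (1/(1−γ)) · { e^{−γx} x^ν ( I_ν(x) − x^ν/(Γ(ν+1)·2^ν) ) − γ(2ν+1, γx)/(Γ(ν+1)·2^ν·γ^{2ν}) }, where γ(a,x) denotes the lower incomplete gamma function. -/
open Real MeasureTheory

/-- Modified Bessel function of the first kind, `I_ν(x) = ∑_{k} (x/2)^{ν+2k} / (Γ(ν+k+1) k!)`. -/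
noncomputable def besselI (ν x : ℝ) : ℝ :=
  ∑' k : ℕ, (x / 2) ^ (ν + 2 * (k : ℝ)) / (Real.Gamma (ν + (k : ℝ) + 1) * (Nat.factorial k : ℝ))

/-- Modified Bessel function of the second kind, `K_ν(x) = ∫_0^∞ e^{-x cosh t} cosh(ν t) dt`. -/
noncomputable def besselK (ν x : ℝ) : ℝ :=
  ∫ t in Set.Ioi (0 : ℝ), Real.exp (-x * Real.cosh t) * Real.cosh (ν * t)

/-- Lower incomplete gamma function `γ(a, x) = ∫_0^x t^{a-1} e^{-t} dt`. -/
noncomputable def lowerIncGamma (a x : ℝ) : ℝ :=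
  ∫ t in (0 : ℝ)..x, t ^ (a - 1) * Real.exp (-t)

namespace Stmt1Aux

open Filter intervalIntegral

/-- coefficient `a_k = 1/(2^(ν+2k) Γ(ν+k+1) k!)` -/
noncomputable def aC (ν : ℝ) (k : ℕ) : ℝ :=
  1 / (2 ^ (ν + 2*(k:ℝ)) * Real.Gamma (ν + (k:ℝ) + 1) * (Nat.factorial k : ℝ))

variable {ν : ℝ}

lemma gamma_arg_pos (hν1 : -(1/2) < ν) (k : ℕ) : 0 < ν + (k:ℝ) + 1 := by
  have : (0:ℝ) ≤ k := Nat.cast_nonneg k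
  linarith

lemma aC_pos (hν1 : -(1/2) < ν) (k : ℕ) : 0 < aC ν k := by
  have h1 : (0:ℝ) < 2 ^ (ν + 2*(k:ℝ)) := Real.rpow_pos_of_pos two_pos _
  have h2 : 0 < Real.Gamma (ν + (k:ℝ) + 1) := Real.Gamma_pos_of_pos (gamma_arg_pos hν1 k)
  have h3 : (0:ℝ) < (Nat.factorial k : ℝ) := by positivity
  unfold aC; positivity

lemma aC_succ (hν1 : -(1/2) < ν) (k : ℕ) :
    aC ν (k+1) = aC ν k / (4 * (ν + (k:ℝ) + 1) * ((k:ℝ)+1)) := by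
  have h1 : (0:ℝ) < 2 ^ (ν + 2*(k:ℝ)) := Real.rpow_pos_of_pos two_pos _
  have h2 : 0 < Real.Gamma (ν + (k:ℝ) + 1) := Real.Gamma_pos_of_pos (gamma_arg_pos hν1 k)
  have h3 : (0:ℝ) < (Nat.factorial k : ℝ) := by positivity
  have hg : Real.Gamma (ν + ((k:ℝ)+1) + 1) = (ν + (k:ℝ) + 1) * Real.Gamma (ν + (k:ℝ) + 1) := by
    rw [show ν + ((k:ℝ)+1) + 1 = (ν + (k:ℝ) + 1) + 1 by ring,
      Real.Gamma_add_one (ne_of_gt (gamma_arg_pos hν1 k))]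
  have hp : (2:ℝ) ^ (ν + 2*((k:ℝ)+1)) = 2 ^ (ν + 2*(k:ℝ)) * 4 := by
    rw [show ν + 2*((k:ℝ)+1) = (ν + 2*(k:ℝ)) + 2 by ring, Real.rpow_add two_pos]
    norm_num
  have hf : ((Nat.factorial (k+1) : ℝ)) = ((k:ℝ)+1) * (Nat.factorial k : ℝ) := by
    rw [Nat.factorial_succ]; push_cast; ring
  unfold aC
  push_cast
  rw [hp, hg, hf]
  have h4 : (0:ℝ) < ν + (k:ℝ) + 1 := gamma_arg_pos hν1 k
  field_simp

lemma aC_summable (hν1 : -(1/2) < ν) {y : ℝ} (hy : 0 ≤ y) :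
    Summable (fun k : ℕ => aC ν k * y ^ k) := by
  apply summable_of_ratio_norm_eventually_le (r := 1/2) (by norm_num)
  filter_upwards [eventually_ge_atTop ⌈y⌉₊] with k hk
  have hyk : y ≤ (k:ℝ) + 1 := by
    calc y ≤ (⌈y⌉₊ : ℝ) := Nat.le_ceil y
    _ ≤ (k:ℝ) := by exact_mod_cast hk
    _ ≤ (k:ℝ) + 1 := by linarith
  have hak := aC_pos hν1 k
  have hak1 := aC_pos hν1 (k+1)
  have hb : (1:ℝ)/2 ≤ ν + (k:ℝ) + 1 := by
    have : (0:ℝ) ≤ k := Nat.cast_nonneg k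
    linarith
  have hk1 : (0:ℝ) < (k:ℝ) + 1 := by positivity
  have hβ := gamma_arg_pos hν1 k
  have hyn : (0:ℝ) ≤ y ^ k := pow_nonneg hy k
  rw [Real.norm_of_nonneg (mul_nonneg hak1.le (pow_nonneg hy _)),
    Real.norm_of_nonneg (mul_nonneg hak.le hyn),
    aC_succ hν1 k, pow_succ]
  rw [div_mul_eq_mul_div, div_mul_eq_mul_div, div_le_iff₀ (by positivity)]
  nlinarith [mul_le_mul_of_nonneg_left hyk (mul_nonneg hak.le hyn),
    mul_le_mul_of_nonneg_right hb (le_of_lt (mul_pos (mul_pos hak hk1) hk1)),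
    mul_nonneg (mul_nonneg hak.le hyn) hy,
    mul_le_mul_of_nonneg_left hb (mul_nonneg (mul_nonneg hak.le hyn) hk1.le)]

/-- AM–GM coefficient inequality: `(a_{k+1}·2(ν+k+1))² ≤ a_k · a_{k+1}` when `ν ≤ 0`. -/
lemma aC_amgm (hν1 : -(1/2) < ν) (hν2 : ν ≤ 0) (k : ℕ) :
    (aC ν (k+1) * (2*(ν+(k:ℝ)+1)))^2 ≤ aC ν k * aC ν (k+1) := by
  have hβ := gamma_arg_pos hν1 k
  have hak := aC_pos hν1 k
  have hk1 : (0:ℝ) < (k:ℝ) + 1 := by positivity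
  have hβk : ν + (k:ℝ) + 1 ≤ (k:ℝ) + 1 := by linarith
  have h1 : aC ν k / (4 * (ν + (k:ℝ)+1) * ((k:ℝ)+1)) * (2*(ν+(k:ℝ)+1))
      = aC ν k / (2*((k:ℝ)+1)) := by
    field_simp
    ring
  rw [aC_succ hν1 k, h1, div_pow, mul_div_assoc', mul_comm (aC ν k) (aC ν k)]
  rw [← mul_div_assoc']
  have h2 : (2*((k:ℝ)+1))^2 = 4*((k:ℝ)+1)*((k:ℝ)+1) := by ring
  have h3 : 4 * (ν+(k:ℝ)+1) * ((k:ℝ)+1) ≤ 4*((k:ℝ)+1)*((k:ℝ)+1) := by nlinarith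
  rw [h2, show aC ν k * (aC ν k / (4 * (ν + (k:ℝ) + 1) * ((k:ℝ) + 1)))
      = aC ν k ^ 2 / (4 * (ν + (k:ℝ) + 1) * ((k:ℝ) + 1)) by ring]
  exact div_le_div_of_nonneg_left (sq_nonneg _) (by positivity) h3

/-- the weighted power integral `∫_0^x e^{-γ t} t^p dt` -/
noncomputable def Pin (γ x p : ℝ) : ℝ := ∫ t in (0:ℝ)..x, Real.exp (-γ*t) * t ^ p

variable {γ x p : ℝ}

lemma P_intable (hp : -1 < p) :
    IntervalIntegrable (fun t => Real.exp (-γ*t) * t ^ p) volume 0 x := by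
  have h := intervalIntegrable_rpow' (a := (0:ℝ)) (b := x) hp
  have hc : ContinuousOn (fun t : ℝ => Real.exp (-γ*t)) (Set.uIcc 0 x) :=
    (Real.continuous_exp.comp (continuous_const.mul continuous_id)).continuousOn
  exact h.continuousOn_mul hc

lemma P_nonneg (hx0 : 0 ≤ x) : 0 ≤ Pin γ x p := by
  apply intervalIntegral.integral_nonneg hx0
  intro t ht
  exact mul_nonneg (Real.exp_nonneg _) (Real.rpow_nonneg ht.1 p)

lemma P_pos (hx : 0 < x) (hp : -1 < p) : 0 < Pin γ x p := by
  apply intervalIntegral.intervalIntegral_pos_of_pos_on (P_intable hp) _ hx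
  intro t ht
  exact mul_pos (Real.exp_pos _) (Real.rpow_pos_of_pos ht.1 p)

lemma P_le (hγ0 : 0 < γ) (hx : 0 < x) (hp : -1 < p) : Pin γ x p ≤ x ^ (p+1) / (p+1) := by
  have h1 : Pin γ x p ≤ ∫ t in (0:ℝ)..x, t ^ p := by
    apply intervalIntegral.integral_mono_on hx.le (P_intable hp)
      (intervalIntegrable_rpow' hp)
    intro t ht
    calc Real.exp (-γ*t) * t ^ p ≤ 1 * t ^ p := by
          apply mul_le_mul_of_nonneg_right _ (Real.rpow_nonneg ht.1 p)
          rw [Real.exp_le_one_iff]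
          nlinarith [ht.1]
    _ = t ^ p := one_mul _
  have h2 : (∫ t in (0:ℝ)..x, t ^ p) = x ^ (p+1) / (p+1) := by
    rw [integral_rpow (Or.inl hp)]
    rw [Real.zero_rpow (by linarith : p + 1 ≠ 0)]
    ring
  linarith
 
lemma P_ftc (hγ0 : 0 < γ) (hx : 0 < x) (hp : 1 ≤ p) :
    Real.exp (-γ*x) * x ^ p = p * Pin γ x (p-1) - γ * Pin γ x p := by
  have hderiv : ∀ t ∈ Set.uIcc (0:ℝ) x, HasDerivAt (fun t => Real.exp (-γ*t) * t ^ p)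
      (p * (Real.exp (-γ*t) * t ^ (p-1)) - γ * (Real.exp (-γ*t) * t ^ p)) t := by
    intro t _
    have h1 : HasDerivAt (fun t : ℝ => Real.exp (-γ*t)) (Real.exp (-γ*t) * (-γ)) t := by
      have : HasDerivAt (fun t : ℝ => -γ*t) (-γ) t := by
        simpa using (hasDerivAt_id t).const_mul (-γ)
      exact this.exp
    have h2 : HasDerivAt (fun t : ℝ => t ^ p) (p * t ^ (p-1)) t :=
      Real.hasDerivAt_rpow_const (Or.inr hp)
    have := h1.fun_mul h2
    exact this.congr_deriv (by ring)
  have hint : IntervalIntegrable (fun t => p * (Real.exp (-γ*t) * t ^ (p-1))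
      - γ * (Real.exp (-γ*t) * t ^ p)) volume 0 x :=
    ((P_intable (by linarith)).const_mul p).sub ((P_intable (by linarith)).const_mul γ)
  have := intervalIntegral.integral_eq_sub_of_hasDerivAt hderiv hint
  rw [intervalIntegral.integral_sub ((P_intable (by linarith)).const_mul p)
      ((P_intable (by linarith)).const_mul γ),
    intervalIntegral.integral_const_mul, intervalIntegral.integral_const_mul] at this
  have h0 : (0:ℝ) ^ p = 0 := Real.zero_rpow (by intro h; rw [h] at hp; linarith)
  rw [h0] at this
  unfold Pin
  rw [this]
  ring

/-- the `k`-th summand of `besselI ν t` -/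
noncomputable def bT (ν t : ℝ) (k : ℕ) : ℝ :=
  (t / 2) ^ (ν + 2 * (k : ℝ)) / (Real.Gamma (ν + (k : ℝ) + 1) * (Nat.factorial k : ℝ))

lemma term_eq {t : ℝ} (ht : 0 < t) (k : ℕ) :
    t ^ ν * bT ν t k = aC ν k * t ^ (2*ν + 2*(k:ℝ)) := by
  unfold bT aC
  rw [Real.div_rpow ht.le (by norm_num : (0:ℝ) ≤ 2)]
  have e1 : t ^ (ν + 2*(k:ℝ)) = t ^ ν * t ^ (2*(k:ℝ)) := Real.rpow_add ht ν (2*(k:ℝ))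
  have e2 : t ^ (2*ν + 2*(k:ℝ)) = t ^ ν * (t ^ ν * t ^ (2*(k:ℝ))) := by
    rw [show (2*ν + 2*(k:ℝ)) = ν + (ν + 2*(k:ℝ)) by ring, Real.rpow_add ht, e1]
  rw [e1, e2]
  ring

lemma rpow_split {t : ℝ} (ht : 0 < t) (c : ℝ) (k : ℕ) :
    t ^ (2*ν + 2*(k:ℝ) + c) = t ^ (2*ν + c) * ((t^2) ^ k : ℝ) := by
  rw [show (2*ν + 2*(k:ℝ) + c) = (2*ν + c) + ((2*k : ℕ) : ℝ) by push_cast; ring,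
    Real.rpow_add ht, Real.rpow_natCast, pow_mul]

lemma aC_summable_rpow (hν1 : -(1/2) < ν) {t : ℝ} (ht : 0 < t) (c : ℝ) :
    Summable (fun k : ℕ => aC ν k * t ^ (2*ν + 2*(k:ℝ) + c)) := by
  have : (fun k : ℕ => aC ν k * t ^ (2*ν + 2*(k:ℝ) + c))
      = fun k : ℕ => t ^ (2*ν + c) * (aC ν k * ((t^2) ^ k)) := by
    funext k; rw [rpow_split ht c k]; ring
  rw [this]
  exact (aC_summable hν1 (sq_nonneg t)).mul_left _

lemma bT_summable (hν1 : -(1/2) < ν) {t : ℝ} (ht : 0 < t) :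
    Summable (fun k : ℕ => bT ν t k) := by
  have h := (aC_summable_rpow hν1 ht 0).mul_left (t ^ (-ν))
  apply h.congr
  intro k
  have h2 : t ^ (-ν) * (aC ν k * t ^ (2*ν + 2*(k:ℝ) + 0)) = t ^ (-ν) * (t ^ ν * bT ν t k) := by
    rw [add_zero, term_eq ht k]
  rw [h2, ← mul_assoc, ← Real.rpow_add ht]
  simp

lemma besselI_term_zero {t : ℝ} (ht : 0 < t) :
    bT ν t 0 = t ^ ν / (Real.Gamma (ν + 1) * 2 ^ ν) := by
  unfold bT
  rw [show ν + 2 * ((0:ℕ):ℝ) = ν by push_cast; ring]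
  rw [Real.div_rpow ht.le (by norm_num : (0:ℝ) ≤ 2)]
  simp [Nat.factorial_zero]
  ring

/-- summability of `a_k · Pin(2ν+2k+c)` -/
lemma aC_P_summable (hν1 : -(1/2) < ν) (hγ0 : 0 < γ) (hx : 0 < x) (c : ℝ)
    (hc : -1 < 2*ν + c) :
    Summable (fun k : ℕ => aC ν k * Pin γ x (2*ν + 2*(k:ℝ) + c)) := by
  have hC : (0:ℝ) < 2*ν + c + 1 := by linarith
  apply Summable.of_nonneg_of_le
    (fun k => mul_nonneg (aC_pos hν1 k).le (P_nonneg hx.le))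
    (fun k => ?_)
    (((aC_summable_rpow hν1 hx (c+1)).mul_left (1/(2*ν+c+1))))
  have hk0 : (0:ℝ) ≤ (k:ℝ) := Nat.cast_nonneg k
  have hpk : -1 < 2*ν + 2*(k:ℝ) + c := by linarith
  have h1 : Pin γ x (2*ν + 2*(k:ℝ) + c) ≤ x ^ (2*ν + 2*(k:ℝ) + c + 1) / (2*ν + 2*(k:ℝ) + c + 1) :=
    P_le hγ0 hx hpk
  have h2 : x ^ (2*ν + 2*(k:ℝ) + c + 1) / (2*ν + 2*(k:ℝ) + c + 1)
      ≤ x ^ (2*ν + 2*(k:ℝ) + c + 1) / (2*ν + c + 1) :=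
    div_le_div_of_nonneg_left (Real.rpow_nonneg hx.le _) hC (by linarith)
  calc aC ν k * Pin γ x (2*ν + 2*(k:ℝ) + c)
      ≤ aC ν k * (x ^ (2*ν + 2*(k:ℝ) + c + 1) / (2*ν + c + 1)) :=
        mul_le_mul_of_nonneg_left (le_trans h1 h2) (aC_pos hν1 k).le
    _ = 1/(2*ν+c+1) * (aC ν k * x ^ (2*ν + 2*(k:ℝ) + (c+1))) := by
        rw [show 2*ν + 2*(k:ℝ) + (c+1) = 2*ν + 2*(k:ℝ) + c + 1 by ring]; ring

end Stmt1Aux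

open Stmt1Aux Filter in
set_option maxHeartbeats 1000000 in
theorem stmt_1 (γ ν : ℝ) (hγ0 : 0 < γ) (hγ1 : γ < 1) (hν1 : -(1/2) < ν) (hν2 : ν ≤ 0)
    (x : ℝ) (hx : 0 < x) :
    ∫ t in (0 : ℝ)..x, Real.exp (-γ * t) * t ^ ν * besselI ν t >
      (1 / (1 - γ)) *
        (Real.exp (-γ * x) * x ^ ν * (besselI ν x - x ^ ν / (Real.Gamma (ν + 1) * 2 ^ ν)) -
          lowerIncGamma (2 * ν + 1) (γ * x) / (Real.Gamma (ν + 1) * 2 ^ ν * γ ^ (2 * ν))) := by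
  have hx0 : (0:ℝ) ≤ x := hx.le
  have h2ν : (-1:ℝ) < 2*ν := by linarith
  have hγ1' : (0:ℝ) < 1 - γ := by linarith
  -- summability facts
  have sumS : Summable (fun k : ℕ => aC ν k * Pin γ x (2*ν + 2*(k:ℝ))) := by
    apply (aC_P_summable hν1 hγ0 hx 0 (by linarith)).congr
    intro k; rw [add_zero]
  have sumS1 : Summable (fun k : ℕ => aC ν (k+1) * Pin γ x (2*ν + 2*((k:ℝ)+1))) := by
    apply ((_root_.summable_nat_add_iff 1).mpr sumS).congr
    intro k; push_cast; ring_nf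
  have sumM : Summable (fun k : ℕ =>
      aC ν (k+1) * (2*(ν+(k:ℝ)+1)) * Pin γ x (2*ν + 2*(k:ℝ) + 1)) := by
    apply Summable.of_nonneg_of_le _ _ (aC_P_summable hν1 hγ0 hx 1 (by linarith))
    · intro k
      exact mul_nonneg (mul_nonneg (aC_pos hν1 (k+1)).le
        (by linarith [gamma_arg_pos hν1 k])) (P_nonneg hx0)
    · intro k
      apply mul_le_mul_of_nonneg_right _ (P_nonneg hx0)
      have hβ := gamma_arg_pos hν1 k
      have hk1 : (0:ℝ) < (k:ℝ)+1 := by positivity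
      rw [aC_succ hν1 k]
      rw [div_mul_eq_mul_div, div_le_iff₀ (by nlinarith : (0:ℝ) < 4*(ν+(k:ℝ)+1)*((k:ℝ)+1))]
      nlinarith [mul_nonneg (mul_nonneg (aC_pos hν1 k).le hβ.le)
        (show (0:ℝ) ≤ 4*(k:ℝ)+2 by positivity)]
  -- Fubini–Tonelli: the LHS integral equals a sum of power integrals
  have hLHS : (∫ t in (0 : ℝ)..x, Real.exp (-γ * t) * t ^ ν * besselI ν t)
      = ∑' k : ℕ, aC ν k * Pin γ x (2*ν + 2*(k:ℝ)) := by
    rw [intervalIntegral.integral_of_le hx0]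
    rw [MeasureTheory.setIntegral_congr_fun (g := fun t =>
        ∑' k : ℕ, Real.exp (-γ*t) * (aC ν k * t ^ (2*ν + 2*(k:ℝ)))) measurableSet_Ioc ?hcong]
    case hcong =>
      intro t ht
      have ht0 : (0:ℝ) < t := ht.1
      show Real.exp (-γ * t) * t ^ ν * besselI ν t = _
      rw [show besselI ν t = ∑' k, bT ν t k from rfl, mul_assoc, ← tsum_mul_left,
        ← tsum_mul_left]
      apply tsum_congr
      intro k
      rw [term_eq ht0 k]
    rw [← MeasureTheory.integral_tsum_of_summable_integral_norm ?hint ?hnorm]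
    case hint =>
      intro k
      have h := P_intable (γ := γ) (x := x) (p := 2*ν + 2*(k:ℝ))
        (by linarith [Nat.cast_nonneg (α := ℝ) k])
      rw [intervalIntegrable_iff_integrableOn_Ioc_of_le hx0] at h
      have hfun : (fun t => Real.exp (-γ*t) * (aC ν k * t ^ (2*ν + 2*(k:ℝ))))
          = fun t => aC ν k * (Real.exp (-γ*t) * t ^ (2*ν + 2*(k:ℝ))) := by
        funext t; ring
      rw [hfun]
      exact h.const_mul _
    case hnorm =>
      apply sumS.congr
      intro k
      rw [MeasureTheory.setIntegral_congr_fun (g := fun t =>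
          aC ν k * (Real.exp (-γ*t) * t ^ (2*ν + 2*(k:ℝ)))) measurableSet_Ioc ?_]
      · rw [MeasureTheory.integral_const_mul]
        unfold Pin
        rw [intervalIntegral.integral_of_le hx0]
      · intro t ht
        have ht0 : (0:ℝ) < t := ht.1
        have hak := aC_pos hν1 k
        show ‖Real.exp (-γ*t) * (aC ν k * t ^ (2*ν + 2*(k:ℝ)))‖
            = aC ν k * (Real.exp (-γ*t) * t ^ (2*ν + 2*(k:ℝ)))
        rw [Real.norm_of_nonneg (by positivity)]
        ring
    apply tsum_congr
    intro k
    have hfun : (fun t => Real.exp (-γ*t) * (aC ν k * t ^ (2*ν + 2*(k:ℝ))))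
        = fun t => aC ν k * (Real.exp (-γ*t) * t ^ (2*ν + 2*(k:ℝ))) := by
      funext t; ring
    rw [hfun, MeasureTheory.integral_const_mul]
    unfold Pin
    rw [intervalIntegral.integral_of_le hx0]
  -- A-side: the exp-Bessel boundary term as a series
  have hA : Real.exp (-γ*x) * x^ν * (besselI ν x - x^ν/(Real.Gamma (ν+1) * 2^ν))
      = (∑' k : ℕ, aC ν (k+1) * (2*(ν+(k:ℝ)+1)) * Pin γ x (2*ν+2*(k:ℝ)+1))
        - γ * ∑' k : ℕ, aC ν (k+1) * Pin γ x (2*ν + 2*((k:ℝ)+1)) := by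
    have hsum := bT_summable (ν := ν) hν1 hx
    have h0 : besselI ν x - x^ν/(Real.Gamma (ν+1) * 2^ν) = ∑' k, bT ν x (k+1) := by
      rw [show besselI ν x = ∑' k, bT ν x k from rfl, Summable.tsum_eq_zero_add hsum,
        besselI_term_zero hx]
      ring
    have step1 : Real.exp (-γ*x) * x^ν * (besselI ν x - x^ν/(Real.Gamma (ν+1) * 2^ν))
        = ∑' k : ℕ, Real.exp (-γ*x) * (aC ν (k+1) * x ^ (2*ν+2*((k:ℝ)+1))) := by
      rw [h0, mul_assoc, ← tsum_mul_left, ← tsum_mul_left]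
      apply tsum_congr
      intro k
      have h := term_eq (ν := ν) hx (k+1)
      push_cast at h
      rw [h]
    rw [step1]
    have step2 : ∀ k : ℕ, Real.exp (-γ*x) * (aC ν (k+1) * x ^ (2*ν+2*((k:ℝ)+1)))
        = aC ν (k+1) * (2*(ν+(k:ℝ)+1)) * Pin γ x (2*ν+2*(k:ℝ)+1)
          - γ * (aC ν (k+1) * Pin γ x (2*ν + 2*((k:ℝ)+1))) := by
      intro k
      have hk0 : (0:ℝ) ≤ (k:ℝ) := Nat.cast_nonneg k
      have hftc := P_ftc (γ := γ) (x := x) (p := 2*ν+2*((k:ℝ)+1)) hγ0 hx (by linarith)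
      rw [show 2*ν+2*((k:ℝ)+1) - 1 = 2*ν+2*(k:ℝ)+1 by ring] at hftc
      calc Real.exp (-γ*x) * (aC ν (k+1) * x ^ (2*ν+2*((k:ℝ)+1)))
          = aC ν (k+1) * (Real.exp (-γ*x) * x ^ (2*ν+2*((k:ℝ)+1))) := by ring
        _ = aC ν (k+1) * ((2*ν+2*((k:ℝ)+1)) * Pin γ x (2*ν+2*(k:ℝ)+1)
            - γ * Pin γ x (2*ν+2*((k:ℝ)+1))) := by rw [hftc]
        _ = _ := by ring
    rw [tsum_congr step2, Summable.tsum_sub sumM ((sumS1).mul_left γ), tsum_mul_left]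
  -- incomplete gamma term
  have hΓpos : 0 < Real.Gamma (ν+1) := Real.Gamma_pos_of_pos (by linarith)
  have h2ν0 : (0:ℝ) < 2 ^ ν := Real.rpow_pos_of_pos two_pos ν
  have hγ2ν : (0:ℝ) < γ ^ (2*ν) := Real.rpow_pos_of_pos hγ0 _
  have haC0 : aC ν 0 = 1/(2 ^ ν * Real.Gamma (ν+1)) := by
    unfold aC
    norm_num
  have hLow : lowerIncGamma (2*ν+1) (γ*x) / (Real.Gamma (ν+1) * 2^ν * γ^(2*ν))
      = γ * (aC ν 0 * Pin γ x (2*ν)) := by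
    have h1 : lowerIncGamma (2*ν+1) (γ*x) = ∫ t in (0:ℝ)..(γ*x), t^(2*ν) * Real.exp (-t) := by
      unfold lowerIncGamma
      norm_num
    have h2 := intervalIntegral.integral_comp_mul_left (a := (0:ℝ)) (b := x) (c := γ)
      (fun u => u^(2*ν) * Real.exp (-u)) hγ0.ne'
    rw [mul_zero] at h2
    have h3 : (∫ t in (0:ℝ)..x, (fun u => u^(2*ν) * Real.exp (-u)) (γ*t))
        = γ^(2*ν) * Pin γ x (2*ν) := by
      unfold Pin
      rw [← intervalIntegral.integral_const_mul]
      apply intervalIntegral.integral_congr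
      intro t ht
      rw [Set.uIcc_of_le hx0] at ht
      show (γ*t)^(2*ν) * Real.exp (-(γ*t)) = γ^(2*ν) * (Real.exp (-γ*t) * t^(2*ν))
      rw [Real.mul_rpow hγ0.le ht.1, neg_mul]
      ring
    have h4 : lowerIncGamma (2*ν+1) (γ*x) = γ * (γ^(2*ν) * Pin γ x (2*ν)) := by
      rw [h1, ← h3, h2, smul_eq_mul]
      field_simp
    rw [h4, haC0]
    field_simp
  -- the nonnegative grouped terms U k
  have hU : ∀ k : ℕ, 0 ≤ (aC ν k * Pin γ x (2*ν + 2*(k:ℝ))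
        + aC ν (k+1) * Pin γ x (2*ν + 2*((k:ℝ)+1))) / 2
      - aC ν (k+1) * (2*(ν+(k:ℝ)+1)) * Pin γ x (2*ν + 2*(k:ℝ) + 1) := by
    intro k
    have hk0 : (0:ℝ) ≤ (k:ℝ) := Nat.cast_nonneg k
    have hp1 : (-1:ℝ) < 2*ν + 2*(k:ℝ) := by linarith
    have hp2 : (-1:ℝ) < 2*ν + 2*(k:ℝ) + 1 := by linarith
    have hp3 : (-1:ℝ) < 2*ν + 2*(k:ℝ) + 2 := by linarith
    have int1 := P_intable (γ := γ) (x := x) hp1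
    have int2 := P_intable (γ := γ) (x := x) hp2
    have int3 := P_intable (γ := γ) (x := x) hp3
    have hargs : 2*ν + 2*((k:ℝ)+1) = 2*ν + 2*(k:ℝ) + 2 := by ring
    rw [hargs]
    set p : ℝ := 2*ν + 2*(k:ℝ) with hp
    set A : ℝ := aC ν k with hA'
    set B : ℝ := aC ν (k+1) with hB'
    set d : ℝ := aC ν (k+1) * (2*(ν+(k:ℝ)+1)) with hd'
    have hcomb : (A * Pin γ x p + B * Pin γ x (p+2)) / 2 - d * Pin γ x (p+1)
        = ∫ t in (0:ℝ)..x, ((A * (Real.exp (-γ*t) * t^p)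
            + B * (Real.exp (-γ*t) * t^(p+2))) / 2 - d * (Real.exp (-γ*t) * t^(p+1))) := by
      unfold Pin
      rw [intervalIntegral.integral_sub (((int1.const_mul A).add (int3.const_mul B)).div_const 2)
          (int2.const_mul d),
        intervalIntegral.integral_div,
        intervalIntegral.integral_add (int1.const_mul A) (int3.const_mul B),
        intervalIntegral.integral_const_mul, intervalIntegral.integral_const_mul,
        intervalIntegral.integral_const_mul]
    rw [hcomb]
    apply intervalIntegral.integral_nonneg hx0
    intro t ht
    have hApos : 0 < A := aC_pos hν1 k
    have hBpos : 0 < B := aC_pos hν1 (k+1)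
    have hamgm : d^2 ≤ A * B := aC_amgm hν1 hν2 k
    rcases eq_or_lt_of_le ht.1 with h0 | h0
    · -- t = 0
      rw [← h0]
      rw [Real.zero_rpow (by linarith : p + 1 ≠ 0), Real.zero_rpow (by linarith : p + 2 ≠ 0)]
      have : (0:ℝ) ≤ (0:ℝ) ^ p := Real.rpow_nonneg le_rfl p
      have he : (0:ℝ) ≤ Real.exp (-γ*0) := Real.exp_nonneg _
      nlinarith [mul_nonneg he this]
    · -- t > 0
      have e1 : t^(p+1) = t^p * t := Real.rpow_add_one h0.ne' p
      have e2 : t^(p+2) = t^p * t * t := by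
        rw [show p+2 = (p+1)+1 by ring, Real.rpow_add_one h0.ne', e1]
      rw [e1, e2]
      have hq : 0 ≤ A / 2 + B / 2 * t^2 - d * t := by
        nlinarith [sq_nonneg (B * t - d), hBpos, hApos, mul_pos hBpos hBpos]
      have heq : (A * (Real.exp (-γ*t) * t^p) + B * (Real.exp (-γ*t) * (t^p * t * t))) / 2
          - d * (Real.exp (-γ*t) * (t^p * t))
          = (Real.exp (-γ*t) * t^p) * (A / 2 + B / 2 * t^2 - d * t) := by ring
      rw [heq]
      exact mul_nonneg (mul_nonneg (Real.exp_nonneg _) (Real.rpow_nonneg h0.le p)) hq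
  have sumU : Summable (fun k : ℕ => (aC ν k * Pin γ x (2*ν + 2*(k:ℝ))
        + aC ν (k+1) * Pin γ x (2*ν + 2*((k:ℝ)+1))) / 2
      - aC ν (k+1) * (2*(ν+(k:ℝ)+1)) * Pin γ x (2*ν + 2*(k:ℝ) + 1)) :=
    ((sumS.add sumS1).div_const 2).sub sumM
  -- tsum algebra
  have hS1 : (∑' k : ℕ, aC ν k * Pin γ x (2*ν + 2*(k:ℝ)))
      = aC ν 0 * Pin γ x (2*ν) + ∑' k : ℕ, aC ν (k+1) * Pin γ x (2*ν + 2*((k:ℝ)+1)) := by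
    rw [Summable.tsum_eq_zero_add sumS]
    congr 1
    · norm_num
    · apply tsum_congr
      intro k
      push_cast
      ring_nf
  have hsumU_eq : (∑' k : ℕ, ((aC ν k * Pin γ x (2*ν + 2*(k:ℝ))
        + aC ν (k+1) * Pin γ x (2*ν + 2*((k:ℝ)+1))) / 2
      - aC ν (k+1) * (2*(ν+(k:ℝ)+1)) * Pin γ x (2*ν + 2*(k:ℝ) + 1)))
      = ((∑' k : ℕ, aC ν k * Pin γ x (2*ν + 2*(k:ℝ)))
          + ∑' k : ℕ, aC ν (k+1) * Pin γ x (2*ν + 2*((k:ℝ)+1))) / 2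
        - ∑' k : ℕ, aC ν (k+1) * (2*(ν+(k:ℝ)+1)) * Pin γ x (2*ν + 2*(k:ℝ) + 1) := by
    rw [Summable.tsum_sub ((sumS.add sumS1).div_const 2) sumM, tsum_div_const, Summable.tsum_add sumS sumS1]
  have hUnn : 0 ≤ ((∑' k : ℕ, aC ν k * Pin γ x (2*ν + 2*(k:ℝ)))
          + ∑' k : ℕ, aC ν (k+1) * Pin γ x (2*ν + 2*((k:ℝ)+1))) / 2
        - ∑' k : ℕ, aC ν (k+1) * (2*(ν+(k:ℝ)+1)) * Pin γ x (2*ν + 2*(k:ℝ) + 1) := by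
    rw [← hsumU_eq]
    exact tsum_nonneg hU
  have hP0 : 0 < Pin γ x (2*ν) := P_pos hx h2ν
  have haC0pos : 0 < aC ν 0 := aC_pos hν1 0
  have haC0P : 0 < aC ν 0 * Pin γ x (2*ν) := mul_pos haC0pos hP0
  -- final assembly
  rw [hLHS, hA, hLow]
  rw [gt_iff_lt, one_div_mul_eq_div, div_lt_iff₀ hγ1']
  nlinarith [hS1, hUnn, haC0P,
    mul_le_mul_of_nonneg_left hUnn (le_of_lt hγ0)]
end

section
/- Let 0 < γ < 1 and ν > −1/2. Then for all x > 0, ∫_0^x e^{−γt} t^ν I_ν(t) dt > e^{−γx} x^ν · ∑_{k=0}^∞ γ^k I_{ν+k+1}(x), where the series on the right-hand side converges absolutely. -/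
open Real MeasureTheory Filter Set intervalIntegral

/-- Bessel series term. -/
noncomputable def bT (μ y : ℝ) (j : ℕ) : ℝ :=
  (y / 2) ^ (μ + 2 * (j : ℝ)) / (Real.Gamma (μ + (j : ℝ) + 1) * (Nat.factorial j : ℝ))

lemma besselI_eq_tsum (μ y : ℝ) : besselI μ y = ∑' j, bT μ y j := rfl

lemma bT_pos {μ y : ℝ} (hμ : -1 < μ) (hy : 0 < y) (j : ℕ) : 0 < bT μ y j := by
  have h1 : (0:ℝ) < Real.Gamma (μ + (j:ℝ) + 1) := by
    apply Real.Gamma_pos_of_pos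
    have : (0:ℝ) ≤ j := Nat.cast_nonneg j
    linarith
  have h2 : (0:ℝ) < (Nat.factorial j : ℝ) := by positivity
  exact div_pos (Real.rpow_pos_of_pos (by linarith) _) (by positivity)

lemma bT_succ {μ y : ℝ} (hμ : -1 < μ) (hy : 0 < y) (j : ℕ) :
    bT μ y (j + 1) = bT μ y j * ((y / 2) ^ (2:ℕ) / ((μ + j + 1) * (j + 1))) := by
  have hne : μ + (j:ℝ) + 1 ≠ 0 := by
    have : (0:ℝ) ≤ j := Nat.cast_nonneg j
    linarith
  have hG : Real.Gamma (μ + (j:ℝ) + 1 + 1) = (μ + j + 1) * Real.Gamma (μ + (j:ℝ) + 1) :=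
    Real.Gamma_add_one hne
  have hpow : (y/2) ^ (μ + 2 * ((j:ℝ)+1)) = (y/2) ^ (μ + 2*(j:ℝ)) * (y/2) ^ (2:ℕ) := by
    rw [← Real.rpow_natCast (y/2) 2, ← Real.rpow_add (by linarith : (0:ℝ) < y/2)]
    ring_nf
  unfold bT
  push_cast
  rw [show μ + ((j:ℝ)+1) + 1 = (μ + (j:ℝ) + 1) + 1 by ring, hG, hpow,
    Nat.factorial_succ]
  have hGpos : (0:ℝ) < Real.Gamma (μ + (j:ℝ) + 1) := by
    apply Real.Gamma_pos_of_pos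
    have : (0:ℝ) ≤ j := Nat.cast_nonneg j
    linarith
  have hfac : (0:ℝ) < (Nat.factorial j : ℝ) := by positivity
  field_simp
  push_cast
  ring


lemma ratio_summable (f : ℕ → ℝ) (h0 : ∀ n, 0 ≤ f n) (C : ℝ)
    (h : ∀ n : ℕ, C ≤ n → f (n + 1) ≤ (1/2) * f n) : Summable f := by
  apply summable_of_ratio_norm_eventually_le (r := 1/2) (by norm_num)
  filter_upwards [eventually_ge_atTop ⌈C⌉₊] with n hn
  have hC : C ≤ (n:ℝ) := le_trans (Nat.le_ceil C) (by exact_mod_cast hn)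
  rw [Real.norm_of_nonneg (h0 _), Real.norm_of_nonneg (h0 _)]
  exact h n hC



lemma bT_summable {μ y : ℝ} (hμ : -1 < μ) (hy : 0 < y) : Summable (bT μ y) := by
  apply ratio_summable _ (fun n => (bT_pos hμ hy n).le) (|μ| + 2 * (y/2)^(2:ℕ) + 1)
  intro n hn
  rw [bT_succ hμ hy n]
  have h1 : (0:ℝ) < bT μ y n := bT_pos hμ hy n
  have h2 : (0:ℝ) < (y/2)^(2:ℕ) := by positivity
  have h3 : -|μ| ≤ μ := neg_abs_le μ
  have h4 : (0:ℝ) < (μ + n + 1) := by linarith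
  have h5 : (1:ℝ) ≤ n + 1 := by
    have : (0:ℝ) ≤ n := Nat.cast_nonneg n
    linarith
  have key : (y/2)^(2:ℕ) / ((μ + n + 1) * (n + 1)) ≤ 1/2 := by
    rw [div_le_iff₀ (by nlinarith)]
    nlinarith
  calc bT μ y n * ((y/2)^(2:ℕ) / ((μ + n + 1) * (n + 1))) ≤ bT μ y n * (1/2) := by
        apply mul_le_mul_of_nonneg_left key h1.le
    _ = 1/2 * bT μ y n := by ring



lemma besselI_pos {μ y : ℝ} (hμ : -1 < μ) (hy : 0 < y) : 0 < besselI μ y := by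
  rw [besselI_eq_tsum]
  exact Summable.tsum_pos (bT_summable hμ hy) (fun j => (bT_pos hμ hy j).le) 0 (bT_pos hμ hy 0)

lemma bT_shift {μ y : ℝ} (hμ : -1 < μ) (hy : 0 < y) (j : ℕ) :
    bT (μ + 1) y j = y / (2 * (μ + (j:ℝ) + 1)) * bT μ y j := by
  have hne : μ + (j:ℝ) + 1 ≠ 0 := by
    have : (0:ℝ) ≤ j := Nat.cast_nonneg j; linarith
  have hG : Real.Gamma (μ + (j:ℝ) + 1 + 1) = (μ + (j:ℝ) + 1) * Real.Gamma (μ + (j:ℝ) + 1) :=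
    Real.Gamma_add_one hne
  have hpow : (y/2) ^ (μ + 1 + 2 * (j:ℝ)) = (y/2) * (y/2) ^ (μ + 2*(j:ℝ)) := by
    have := Real.rpow_add (by linarith : (0:ℝ) < y/2) 1 (μ + 2*(j:ℝ))
    rw [Real.rpow_one] at this
    rw [show μ + 1 + 2 * (j:ℝ) = 1 + (μ + 2*(j:ℝ)) by ring, this]
  have hGpos : (0:ℝ) < Real.Gamma (μ + (j:ℝ) + 1) := by
    apply Real.Gamma_pos_of_pos
    have : (0:ℝ) ≤ j := Nat.cast_nonneg j; linarith
  have hfac : (0:ℝ) < (Nat.factorial j : ℝ) := by positivity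
  unfold bT
  rw [show μ + 1 + (j:ℝ) + 1 = (μ + (j:ℝ) + 1) + 1 by ring, hG, hpow]
  have h1 : (0:ℝ) < μ + (j:ℝ) + 1 := by
    have : (0:ℝ) ≤ j := Nat.cast_nonneg j; linarith
  field_simp

lemma besselI_succ_le {μ y : ℝ} (hμ : -1 < μ) (hy : 0 < y) :
    besselI (μ + 1) y ≤ y / (2 * (μ + 1)) * besselI μ y := by
  rw [besselI_eq_tsum, besselI_eq_tsum, ← tsum_mul_left]
  refine Summable.tsum_le_tsum ?_ (bT_summable (by linarith) hy) ((bT_summable hμ hy).mul_left _)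
  intro j
  rw [bT_shift hμ hy j]
  have hj : (0:ℝ) ≤ j := Nat.cast_nonneg j
  have h1 : (0:ℝ) < μ + 1 := by linarith
  have h2 : (0:ℝ) < μ + (j:ℝ) + 1 := by linarith
  have hb := bT_pos hμ hy j
  apply mul_le_mul_of_nonneg_right _ hb.le
  apply div_le_div_of_nonneg_left hy.le (by linarith) (by linarith)

lemma sum_geom_bessel {c μ y : ℝ} (hc : 0 ≤ c) (hμ : 0 < μ) (hy : 0 < y) :
    Summable (fun k : ℕ => c ^ k * besselI (μ + k) y) := by
  apply ratio_summable _ ?_ (c * y)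
  · intro k hk
    have hb : besselI (μ + (k:ℝ) + 1) y ≤ y / (2 * (μ + k + 1)) * besselI (μ + k) y := by
      have := besselI_succ_le (μ := μ + k) (y := y) (by
        have : (0:ℝ) ≤ k := Nat.cast_nonneg k; linarith) hy
      linarith [this]
    have hkpos : (0:ℝ) ≤ k := Nat.cast_nonneg k
    have hbp : 0 < besselI (μ + (k:ℝ)) y := besselI_pos (by linarith) hy
    have hcast : μ + ((k:ℕ)+1 : ℕ) = μ + (k:ℝ) + 1 := by push_cast; ring
    rw [hcast]
    have step : c ^ (k+1) * besselI (μ + (k:ℝ) + 1) y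
        ≤ c ^ k * (c * (y / (2 * (μ + k + 1)) * besselI (μ + k) y)) := by
      rw [pow_succ]
      have hbnn : 0 ≤ besselI (μ + (k:ℝ) + 1) y :=
        (besselI_pos (by linarith) hy).le
      calc c ^ (k+1) * besselI (μ + (k:ℝ) + 1) y
          = c ^ k * c * besselI (μ + (k:ℝ) + 1) y := by ring
        _ ≤ c ^ k * c * (y / (2 * (μ + k + 1)) * besselI (μ + k) y) := by
            apply mul_le_mul_of_nonneg_left hb (by positivity)
        _ = c ^ k * (c * (y / (2 * (μ + k + 1)) * besselI (μ + k) y)) := by ring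
    refine step.trans ?_
    have hfrac : c * (y / (2 * (μ + k + 1))) ≤ 1/2 := by
      have h2 : (0:ℝ) < 2 * (μ + k + 1) := by linarith
      rw [mul_div_assoc', div_le_div_iff₀ h2 (by norm_num : (0:ℝ) < 2)]
      nlinarith
    calc c ^ k * (c * (y / (2 * (μ + k + 1)) * besselI (μ + k) y))
        = (c * (y / (2 * (μ + k + 1)))) * (c ^ k * besselI (μ + k) y) := by ring
      _ ≤ 1/2 * (c ^ k * besselI (μ + k) y) := by
          apply mul_le_mul_of_nonneg_right hfrac
          have : 0 < besselI (μ + (k:ℝ)) y := besselI_pos (by linarith) hy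
          positivity
  · intro k
    have : 0 < besselI (μ + (k:ℝ)) y :=
      besselI_pos (by have : (0:ℝ) ≤ k := Nat.cast_nonneg k; linarith) hy
    positivity


noncomputable def Jf (γ x b : ℝ) : ℝ := ∫ t in Set.Ioc (0:ℝ) x, t ^ b * Real.exp (-γ * t)

lemma J_integrableOn {γ x b : ℝ} (hb : -1 < b) (hx : 0 < x) :
    IntegrableOn (fun t => t ^ b * Real.exp (-γ * t)) (Set.Ioc 0 x) := by
  have h1 : IntervalIntegrable (fun t : ℝ => t ^ b) volume 0 x :=
    intervalIntegral.intervalIntegrable_rpow' hb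
  have h2 : IntervalIntegrable (fun t : ℝ => t ^ b * Real.exp (-γ * t)) volume 0 x :=
    h1.mul_continuousOn (Continuous.continuousOn (by continuity))
  rwa [intervalIntegrable_iff_integrableOn_Ioc_of_le hx.le] at h2

lemma J_eq_interval {γ x b : ℝ} (hx : 0 < x) :
    Jf γ x b = ∫ t in (0:ℝ)..x, t ^ b * Real.exp (-γ * t) := by
  rw [intervalIntegral.integral_of_le hx.le]; rfl

lemma J_nonneg {γ x b : ℝ} (hx : 0 < x) : 0 ≤ Jf γ x b := by
  apply setIntegral_nonneg measurableSet_Ioc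
  intro t ht
  have := ht.1
  positivity

lemma J_pos {γ x b : ℝ} (hb : -1 < b) (hx : 0 < x) : 0 < Jf γ x b := by
  rw [J_eq_interval hx]
  apply intervalIntegral_pos_of_pos_on
  · rw [intervalIntegrable_iff_integrableOn_Ioc_of_le hx.le]; exact J_integrableOn hb hx
  · intro t ht
    have := ht.1
    positivity
  · exact hx

lemma J_succ_le {γ x b : ℝ} (hb : -1 < b) (hx : 0 < x) : Jf γ x (b + 1) ≤ x * Jf γ x b := by
  unfold Jf
  rw [← MeasureTheory.integral_const_mul]
  apply setIntegral_mono_on (J_integrableOn (by linarith) hx)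
    ((J_integrableOn hb hx).const_mul x) measurableSet_Ioc
  intro t ht
  have ht0 := ht.1
  have ht1 := ht.2
  have : t ^ (b + 1) = t ^ b * t := by
    rw [Real.rpow_add ht0, Real.rpow_one]
  rw [this, show x * (t ^ b * Real.exp (-γ * t)) = t ^ b * x * Real.exp (-γ * t) by ring]
  have he : (0:ℝ) < Real.exp (-γ * t) := Real.exp_pos _
  have hpb : (0:ℝ) ≤ t ^ b := (Real.rpow_pos_of_pos ht0 b).le
  gcongr

lemma J_le {γ x b : ℝ} (hγ : 0 ≤ γ) (hb : -1 < b) (hx : 0 < x) :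
    Jf γ x b ≤ x ^ (b + 1) / (b + 1) := by
  have h1 : Jf γ x b ≤ ∫ t in Set.Ioc (0:ℝ) x, t ^ b := by
    apply setIntegral_mono_on (J_integrableOn hb hx) ?_ measurableSet_Ioc
    · intro t ht
      have ht0 := ht.1
      have hpb : (0:ℝ) ≤ t ^ b := (Real.rpow_pos_of_pos ht0 b).le
      have he : Real.exp (-γ * t) ≤ 1 := by
        rw [Real.exp_le_one_iff]
        nlinarith
      calc t ^ b * Real.exp (-γ * t) ≤ t ^ b * 1 := by nlinarith
        _ = t ^ b := by ring
    · rw [← intervalIntegrable_iff_integrableOn_Ioc_of_le hx.le]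
      exact intervalIntegral.intervalIntegrable_rpow' hb
  have h2 : (∫ t in Set.Ioc (0:ℝ) x, t ^ b) = x ^ (b + 1) / (b + 1) := by
    rw [← intervalIntegral.integral_of_le hx.le, integral_rpow (Or.inl hb)]
    rw [Real.zero_rpow (by linarith : b + 1 ≠ 0)]
    ring
  linarith

lemma ftc_mono {γ x a : ℝ} (ha : 0 < a) (hx : 0 < x) :
    Real.exp (-γ * x) * x ^ a = a * Jf γ x (a - 1) - γ * Jf γ x a := by
  have key : ∫ t in (0:ℝ)..x, (a * t ^ (a-1) - γ * t ^ a) * Real.exp (-γ * t)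
      = Real.exp (-γ * x) * x ^ a := by
    have hderiv : ∀ t ∈ Set.Ioo (0:ℝ) x,
        HasDerivWithinAt (fun t : ℝ => t ^ a * Real.exp (-γ * t))
          ((a * t ^ (a-1) - γ * t ^ a) * Real.exp (-γ * t)) (Set.Ioi t) t := by
      intro t ht
      have h1 : HasDerivAt (fun t : ℝ => t ^ a) (a * t ^ (a-1)) t :=
        Real.hasDerivAt_rpow_const (Or.inl ht.1.ne')
      have h2 : HasDerivAt (fun t : ℝ => Real.exp (-γ * t)) (Real.exp (-γ * t) * (-γ)) t := by
        have := ((hasDerivAt_id t).const_mul (-γ)).exp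
        simpa [mul_comm] using this
      have := h1.fun_mul h2
      apply HasDerivAt.hasDerivWithinAt
      convert this using 1
      · rfl
      · ring
    have hcont : ContinuousOn (fun t : ℝ => t ^ a * Real.exp (-γ * t)) (Set.Icc 0 x) := by
      apply ContinuousOn.mul
      · intro t ht
        apply ContinuousAt.continuousWithinAt
        exact Real.continuousAt_rpow_const t a (Or.inr ha.le)
      · exact (Real.continuous_exp.comp (continuous_const.mul continuous_id)).continuousOn
    have hint : IntervalIntegrable
        (fun t : ℝ => (a * t ^ (a-1) - γ * t ^ a) * Real.exp (-γ * t)) volume 0 x := by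
      have i1 : IntervalIntegrable (fun t : ℝ => a * t ^ (a-1) - γ * t ^ a) volume 0 x := by
        apply IntervalIntegrable.sub
        · exact (intervalIntegral.intervalIntegrable_rpow' (by linarith)).const_mul a
        · exact (intervalIntegral.intervalIntegrable_rpow' (by linarith)).const_mul γ
      exact i1.mul_continuousOn (Continuous.continuousOn (by continuity))
    have := intervalIntegral.integral_eq_sub_of_hasDeriv_right_of_le hx.le hcont hderiv hint
    rw [this, Real.zero_rpow ha.ne']
    ring
  have split : ∫ t in (0:ℝ)..x, (a * t ^ (a-1) - γ * t ^ a) * Real.exp (-γ * t)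
      = a * Jf γ x (a-1) - γ * Jf γ x a := by
    have e1 : ∀ t : ℝ, (a * t ^ (a-1) - γ * t ^ a) * Real.exp (-γ * t)
        = a * (t ^ (a-1) * Real.exp (-γ * t)) - γ * (t ^ a * Real.exp (-γ * t)) := by
      intro t; ring
    simp_rw [e1]
    rw [intervalIntegral.integral_sub, intervalIntegral.integral_const_mul,
      intervalIntegral.integral_const_mul, ← J_eq_interval hx, ← J_eq_interval hx]
    · exact ((intervalIntegral.intervalIntegrable_rpow' (by linarith : (-1:ℝ) < a - 1)).mul_continuousOn
        (Continuous.continuousOn (by continuity))).const_mul a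
    · exact ((intervalIntegral.intervalIntegrable_rpow' (by linarith : (-1:ℝ) < a)).mul_continuousOn
        (Continuous.continuousOn (by continuity))).const_mul γ
  rw [← split, key]

noncomputable def Ac (γ ν : ℝ) (k j : ℕ) : ℝ :=
  γ ^ k * (1/2:ℝ) ^ (ν + (k:ℝ) + 1 + 2*(j:ℝ)) / (Real.Gamma (ν + (k:ℝ) + (j:ℝ) + 2) * (Nat.factorial j : ℝ))

noncomputable def Bc (γ ν : ℝ) (k j : ℕ) : ℝ :=
  γ ^ k * (1/2:ℝ) ^ (ν + (k:ℝ) + 2*(j:ℝ)) / (Real.Gamma (ν + (k:ℝ) + (j:ℝ) + 1) * (Nat.factorial j : ℝ))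

lemma Gamma_arg_pos {ν : ℝ} (hν : -(1/2) < ν) (k j : ℕ) : (0:ℝ) < ν + (k:ℝ) + (j:ℝ) + 1 := by
  have hk : (0:ℝ) ≤ k := Nat.cast_nonneg k
  have hj : (0:ℝ) ≤ j := Nat.cast_nonneg j
  linarith

lemma Ac_pos {γ ν : ℝ} (hγ : 0 < γ) (hν : -(1/2) < ν) (k j : ℕ) : 0 < Ac γ ν k j := by
  have h1 : (0:ℝ) < Real.Gamma (ν + (k:ℝ) + (j:ℝ) + 2) := by
    apply Real.Gamma_pos_of_pos; have := Gamma_arg_pos hν k j; linarith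
  have h2 : (0:ℝ) < (Nat.factorial j : ℝ) := by positivity
  have h3 : (0:ℝ) < (1/2:ℝ) ^ (ν + (k:ℝ) + 1 + 2*(j:ℝ)) := Real.rpow_pos_of_pos (by norm_num) _
  unfold Ac; positivity

lemma Bc_pos {γ ν : ℝ} (hγ : 0 < γ) (hν : -(1/2) < ν) (k j : ℕ) : 0 < Bc γ ν k j := by
  have h1 : (0:ℝ) < Real.Gamma (ν + (k:ℝ) + (j:ℝ) + 1) :=
    Real.Gamma_pos_of_pos (Gamma_arg_pos hν k j)
  have h2 : (0:ℝ) < (Nat.factorial j : ℝ) := by positivity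
  have h3 : (0:ℝ) < (1/2:ℝ) ^ (ν + (k:ℝ) + 2*(j:ℝ)) := Real.rpow_pos_of_pos (by norm_num) _
  unfold Bc; positivity

lemma rel1 {γ ν : ℝ} (hν : -(1/2) < ν) (k j : ℕ) :
    Bc γ ν k j = 2 * (ν + (k:ℝ) + (j:ℝ) + 1) * Ac γ ν k j := by
  have hpos := Gamma_arg_pos hν k j
  have hG : Real.Gamma (ν + (k:ℝ) + (j:ℝ) + 1 + 1)
      = (ν + (k:ℝ) + (j:ℝ) + 1) * Real.Gamma (ν + (k:ℝ) + (j:ℝ) + 1) :=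
    Real.Gamma_add_one hpos.ne'
  have hpow : (1/2:ℝ) ^ (ν + (k:ℝ) + 1 + 2*(j:ℝ))
      = (1/2:ℝ) ^ (ν + (k:ℝ) + 2*(j:ℝ)) * (1/2) := by
    rw [show ν + (k:ℝ) + 1 + 2*(j:ℝ) = (ν + (k:ℝ) + 2*(j:ℝ)) + 1 by ring,
      Real.rpow_add (by norm_num : (0:ℝ) < 1/2), Real.rpow_one]
  have hGpos : (0:ℝ) < Real.Gamma (ν + (k:ℝ) + (j:ℝ) + 1) := Real.Gamma_pos_of_pos hpos
  have hfac : (0:ℝ) < (Nat.factorial j : ℝ) := by positivity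
  unfold Ac Bc
  rw [show ν + (k:ℝ) + (j:ℝ) + 2 = ν + (k:ℝ) + (j:ℝ) + 1 + 1 by ring, hG, hpow]
  field_simp

lemma rel2 {γ ν : ℝ} (k j : ℕ) : Bc γ ν (k+1) j = γ * Ac γ ν k j := by
  unfold Ac Bc
  push_cast
  rw [show ν + ((k:ℝ)+1) + (j:ℝ) + 1 = ν + (k:ℝ) + (j:ℝ) + 2 by ring,
    show ν + ((k:ℝ)+1) + 2*(j:ℝ) = ν + (k:ℝ) + 1 + 2*(j:ℝ) by ring, pow_succ]
  ring

noncomputable def Bt (γ ν x : ℝ) (k j : ℕ) : ℝ := Bc γ ν k j * Jf γ x (2*ν + (k:ℝ) + 2*(j:ℝ))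

noncomputable def Et (γ ν x : ℝ) (k j : ℕ) : ℝ :=
  ((k:ℝ) + 1) * Ac γ ν k j * Jf γ x (2*ν + (k:ℝ) + 2*(j:ℝ))

noncomputable def Tm (γ ν x : ℝ) (k j : ℕ) : ℝ :=
  Ac γ ν k j * (Real.exp (-γ * x) * x ^ (2*ν + (k:ℝ) + 1 + 2*(j:ℝ)))

lemma expo_pos {ν : ℝ} (hν : -(1/2) < ν) (k j : ℕ) : (0:ℝ) < 2*ν + (k:ℝ) + 1 + 2*(j:ℝ) := by
  have hk : (0:ℝ) ≤ k := Nat.cast_nonneg k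
  have hj : (0:ℝ) ≤ j := Nat.cast_nonneg j
  linarith

lemma expo_gt {ν : ℝ} (hν : -(1/2) < ν) (k j : ℕ) : (-1:ℝ) < 2*ν + (k:ℝ) + 2*(j:ℝ) := by
  have hk : (0:ℝ) ≤ k := Nat.cast_nonneg k
  have hj : (0:ℝ) ≤ j := Nat.cast_nonneg j
  linarith

lemma Tm_eq {γ ν x : ℝ} (hγ : 0 < γ) (hν : -(1/2) < ν) (hx : 0 < x) (k j : ℕ) :
    Tm γ ν x k j = Bt γ ν x k j - Bt γ ν x (k+1) j - Et γ ν x k j := by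
  have hftc := ftc_mono (γ := γ) (a := 2*ν + (k:ℝ) + 1 + 2*(j:ℝ)) (expo_pos hν k j) hx
  unfold Tm Bt Et
  rw [hftc]
  rw [show 2*ν + (k:ℝ) + 1 + 2*(j:ℝ) - 1 = 2*ν + (k:ℝ) + 2*(j:ℝ) by ring]
  rw [rel2 (γ := γ) (ν := ν) k j, rel1 hν k j]
  rw [show 2*ν + ((k+1:ℕ):ℝ) + 2*(j:ℝ) = 2*ν + (k:ℝ) + 1 + 2*(j:ℝ) by push_cast; ring]
  ring

lemma Bt_nonneg {γ ν x : ℝ} (hγ : 0 < γ) (hν : -(1/2) < ν) (hx : 0 < x) (k j : ℕ) :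
    0 ≤ Bt γ ν x k j :=
  mul_nonneg (Bc_pos hγ hν k j).le (J_nonneg hx)

lemma Et_nonneg {γ ν x : ℝ} (hγ : 0 < γ) (hν : -(1/2) < ν) (hx : 0 < x) (k j : ℕ) :
    0 ≤ Et γ ν x k j := by
  have hk : (0:ℝ) ≤ k := Nat.cast_nonneg k
  exact mul_nonneg (mul_nonneg (by linarith) (Ac_pos hγ hν k j).le) (J_nonneg hx)

lemma Bt_summable_k {γ ν x : ℝ} (hγ : 0 < γ) (hν : -(1/2) < ν) (hx : 0 < x) (j : ℕ) :
    Summable (fun k => Bt γ ν x k j) := by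
  apply ratio_summable _ (fun k => Bt_nonneg hγ hν hx k j) (γ * x)
  intro k hk
  have hkc : (0:ℝ) ≤ k := Nat.cast_nonneg k
  have hjc : (0:ℝ) ≤ j := Nat.cast_nonneg j
  have hgp := Gamma_arg_pos hν k j
  -- Bc (k+1) j = γ * Ac k j = γ / (2 (ν+k+j+1)) * Bc k j
  have hBc : Bc γ ν (k+1) j = γ / (2 * (ν + (k:ℝ) + (j:ℝ) + 1)) * Bc γ ν k j := by
    rw [rel2, rel1 hν k j]
    field_simp
  have hJ : Jf γ x (2*ν + ((k+1:ℕ):ℝ) + 2*(j:ℝ)) ≤ x * Jf γ x (2*ν + (k:ℝ) + 2*(j:ℝ)) := by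
    rw [show 2*ν + ((k+1:ℕ):ℝ) + 2*(j:ℝ) = (2*ν + (k:ℝ) + 2*(j:ℝ)) + 1 by push_cast; ring]
    exact J_succ_le (expo_gt hν k j) hx
  have hstep : Bt γ ν x (k+1) j
      ≤ (γ * x / (2 * (ν + (k:ℝ) + (j:ℝ) + 1))) * Bt γ ν x k j := by
    unfold Bt
    rw [hBc]
    have hBcn : (0:ℝ) ≤ Bc γ ν k j := (Bc_pos hγ hν k j).le
    calc γ / (2 * (ν + (k:ℝ) + (j:ℝ) + 1)) * Bc γ ν k j * Jf γ x (2*ν + ((k+1:ℕ):ℝ) + 2*(j:ℝ))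
        ≤ γ / (2 * (ν + (k:ℝ) + (j:ℝ) + 1)) * Bc γ ν k j
            * (x * Jf γ x (2*ν + (k:ℝ) + 2*(j:ℝ))) := by
          apply mul_le_mul_of_nonneg_left hJ
          positivity
      _ = (γ * x / (2 * (ν + (k:ℝ) + (j:ℝ) + 1))) * (Bc γ ν k j * Jf γ x (2*ν + (k:ℝ) + 2*(j:ℝ))) := by
          ring
  refine hstep.trans ?_
  apply mul_le_mul_of_nonneg_right _ (Bt_nonneg hγ hν hx k j)
  rw [div_le_div_iff₀ (by linarith) (by norm_num : (0:ℝ) < 2)]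
  nlinarith

lemma Et_le_Bt {γ ν x : ℝ} (hγ : 0 < γ) (hν : -(1/2) < ν) (hx : 0 < x) (k j : ℕ) :
    Et γ ν x k j ≤ Bt γ ν x k j := by
  unfold Et Bt
  rw [rel1 hν k j]
  apply mul_le_mul_of_nonneg_right _ (J_nonneg hx)
  apply mul_le_mul_of_nonneg_right _ (Ac_pos hγ hν k j).le
  have hkc : (0:ℝ) ≤ k := Nat.cast_nonneg k
  have hjc : (0:ℝ) ≤ j := Nat.cast_nonneg j
  linarith

lemma Et_summable_k {γ ν x : ℝ} (hγ : 0 < γ) (hν : -(1/2) < ν) (hx : 0 < x) (j : ℕ) :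
    Summable (fun k => Et γ ν x k j) :=
  Summable.of_nonneg_of_le (fun k => Et_nonneg hγ hν hx k j)
    (fun k => Et_le_Bt hγ hν hx k j) (Bt_summable_k hγ hν hx j)

lemma Tm_eq_bT {γ ν x : ℝ} (hν : -(1/2) < ν) (hx : 0 < x) (k j : ℕ) :
    Tm γ ν x k j = (Real.exp (-γ * x) * x ^ ν * γ ^ k) * bT (ν + (k:ℝ) + 1) x j := by
  have hkc : (0:ℝ) ≤ k := Nat.cast_nonneg k
  have hjc : (0:ℝ) ≤ j := Nat.cast_nonneg j
  have hGpos : (0:ℝ) < Real.Gamma (ν + (k:ℝ) + (j:ℝ) + 2) := by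
    apply Real.Gamma_pos_of_pos; linarith
  have hfac : (0:ℝ) < (Nat.factorial j : ℝ) := by positivity
  have h2 : (0:ℝ) < (2:ℝ) ^ (ν + (k:ℝ) + 1 + 2*(j:ℝ)) := Real.rpow_pos_of_pos (by norm_num) _
  unfold Tm Ac bT
  rw [Real.div_rpow hx.le (by norm_num : (0:ℝ) ≤ 2),
    Real.div_rpow (by norm_num : (0:ℝ) ≤ 1) (by norm_num : (0:ℝ) ≤ 2), Real.one_rpow,
    show ν + (k:ℝ) + 1 + (j:ℝ) + 1 = ν + (k:ℝ) + (j:ℝ) + 2 by ring,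
    show (2:ℝ)*ν + (k:ℝ) + 1 + 2*(j:ℝ) = ν + (ν + (k:ℝ) + 1 + 2*(j:ℝ)) by ring,
    Real.rpow_add hx]
  field_simp

lemma Tm_row_summable {γ ν x : ℝ} (hν : -(1/2) < ν) (hx : 0 < x) (k : ℕ) :
    Summable (fun j => Tm γ ν x k j) := by
  have hμ : (-1:ℝ) < ν + (k:ℝ) + 1 := by
    have : (0:ℝ) ≤ k := Nat.cast_nonneg k; linarith
  have := (bT_summable hμ hx).mul_left (Real.exp (-γ * x) * x ^ ν * γ ^ k)
  exact this.congr (fun j => (Tm_eq_bT hν hx k j).symm)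

lemma Tm_row_tsum {γ ν x : ℝ} (hν : -(1/2) < ν) (hx : 0 < x) (k : ℕ) :
    ∑' j, Tm γ ν x k j = Real.exp (-γ * x) * x ^ ν * (γ ^ k * besselI (ν + (k:ℝ) + 1) x) := by
  rw [besselI_eq_tsum, ← tsum_mul_left, ← tsum_mul_left]
  apply tsum_congr
  intro j
  rw [Tm_eq_bT hν hx k j]
  ring

lemma summable1 {γ ν x : ℝ} (hγ0 : 0 < γ) (hν : -(1/2) < ν) (hx : 0 < x) :
    Summable (fun k : ℕ => γ ^ k * besselI (ν + (k:ℝ) + 1) x) := by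
  have h := sum_geom_bessel (c := γ) (μ := ν + 1) hγ0.le (by linarith) hx
  exact h.congr (fun k => by rw [show ν + 1 + (k:ℝ) = ν + (k:ℝ) + 1 by ring])

lemma Tm_pos {γ ν x : ℝ} (hγ : 0 < γ) (hν : -(1/2) < ν) (hx : 0 < x) (k j : ℕ) :
    0 < Tm γ ν x k j := by
  have h1 := Ac_pos hγ hν k j
  have h2 : (0:ℝ) < x ^ (2*ν + (k:ℝ) + 1 + 2*(j:ℝ)) := Real.rpow_pos_of_pos hx _
  unfold Tm
  positivity

lemma Tm_prod_summable {γ ν x : ℝ} (hγ : 0 < γ) (hν : -(1/2) < ν) (hx : 0 < x) :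
    Summable (fun p : ℕ × ℕ => Tm γ ν x p.1 p.2) := by
  rw [summable_prod_of_nonneg (fun p => (Tm_pos hγ hν hx p.1 p.2).le)]
  constructor
  · exact fun k => Tm_row_summable hν hx k
  · apply Summable.congr (((summable1 hγ hν hx).mul_left
      (Real.exp (-γ * x) * x ^ ν)).congr (fun k => rfl))
    intro k
    rw [Tm_row_tsum hν hx k]

lemma Tm_col_summable {γ ν x : ℝ} (hγ : 0 < γ) (hν : -(1/2) < ν) (hx : 0 < x) (j : ℕ) :
    Summable (fun k => Tm γ ν x k j) := by
  apply Summable.of_nonneg_of_le (fun k => (Tm_pos hγ hν hx k j).le) _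
    ((Bt_summable_k hγ hν hx j).add (Et_summable_k hγ hν hx j))
  intro k
  rw [Tm_eq hγ hν hx k j]
  have h1 := Bt_nonneg hγ hν hx (k+1) j
  have h2 := Et_nonneg hγ hν hx k j
  linarith

set_option maxHeartbeats 1000000 in
lemma RHS_swap {γ ν x : ℝ} (hγ : 0 < γ) (hν : -(1/2) < ν) (hx : 0 < x) :
    Real.exp (-γ * x) * x ^ ν * ∑' k : ℕ, γ ^ k * besselI (ν + (k:ℝ) + 1) x
      = ∑' j, ∑' k, Tm γ ν x k j := by
  rw [← tsum_mul_left]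
  rw [tsum_congr (fun k => (Tm_row_tsum hν hx k).symm)]
  exact (Summable.tsum_comm' (f := fun k j => Tm γ ν x k j) (Tm_prod_summable hγ hν hx)
    (Tm_row_summable hν hx) (Tm_col_summable hγ hν hx)).symm

lemma col_tsum {γ ν x : ℝ} (hγ : 0 < γ) (hν : -(1/2) < ν) (hx : 0 < x) (j : ℕ) :
    ∑' k, Tm γ ν x k j = Bt γ ν x 0 j - ∑' k, Et γ ν x k j := by
  have hB := Bt_summable_k hγ hν hx j
  have hB1 : Summable (fun k => Bt γ ν x (k+1) j) := (summable_nat_add_iff 1).mpr hB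
  have hE := Et_summable_k hγ hν hx j
  calc ∑' k, Tm γ ν x k j
      = ∑' k, ((Bt γ ν x k j - Bt γ ν x (k+1) j) - Et γ ν x k j) :=
        tsum_congr (fun k => by rw [Tm_eq hγ hν hx k j])
    _ = (∑' k, (Bt γ ν x k j - Bt γ ν x (k+1) j)) - ∑' k, Et γ ν x k j :=
        Summable.tsum_sub (hB.sub hB1) hE
    _ = ((∑' k, Bt γ ν x k j) - ∑' k, Bt γ ν x (k+1) j) - ∑' k, Et γ ν x k j := by
        rw [Summable.tsum_sub hB hB1]
    _ = Bt γ ν x 0 j - ∑' k, Et γ ν x k j := by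
        rw [Summable.tsum_eq_zero_add hB]
        ring

lemma Bt0_eq {γ ν x : ℝ} (j : ℕ) :
    Bt γ ν x 0 j = Bc γ ν 0 j * Jf γ x (2*ν + 2*(j:ℝ)) := by
  unfold Bt
  norm_num

lemma g_eq {γ ν : ℝ} (hν : -(1/2) < ν) {t : ℝ} (ht : 0 < t) (j : ℕ) :
    Bc γ ν 0 j * (t ^ (2*ν + 2*(j:ℝ)) * Real.exp (-γ * t))
      = Real.exp (-γ * t) * t ^ ν * bT ν t j := by
  have hjc : (0:ℝ) ≤ j := Nat.cast_nonneg j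
  have hGpos : (0:ℝ) < Real.Gamma (ν + (j:ℝ) + 1) := by
    apply Real.Gamma_pos_of_pos; linarith
  have hfac : (0:ℝ) < (Nat.factorial j : ℝ) := by positivity
  have h2 : (0:ℝ) < (2:ℝ) ^ (ν + 2*(j:ℝ)) := Real.rpow_pos_of_pos (by norm_num) _
  unfold Bc bT
  rw [Real.div_rpow ht.le (by norm_num : (0:ℝ) ≤ 2),
    Real.div_rpow (by norm_num : (0:ℝ) ≤ 1) (by norm_num : (0:ℝ) ≤ 2), Real.one_rpow]
  rw [show ν + ((0:ℕ):ℝ) + 2*(j:ℝ) = ν + 2*(j:ℝ) by norm_num,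
    show ν + ((0:ℕ):ℝ) + (j:ℝ) + 1 = ν + (j:ℝ) + 1 by norm_num,
    show (2:ℝ)*ν + 2*(j:ℝ) = ν + (ν + 2*(j:ℝ)) by ring,
    Real.rpow_add ht, pow_zero]
  field_simp

lemma Bt0_le {γ ν x : ℝ} (hγ : 0 < γ) (hν : -(1/2) < ν) (hx : 0 < x) (j : ℕ) :
    Bt γ ν x 0 j ≤ (x / (2*ν + 1)) * (x ^ ν * bT ν x j) := by
  have hjc : (0:ℝ) ≤ j := Nat.cast_nonneg j
  have hb : (-1:ℝ) < 2*ν + 2*(j:ℝ) := by linarith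
  have hBc := Bc_pos (γ := γ) (ν := ν) hγ hν 0 j
  have hxb : (0:ℝ) < x ^ (2*ν + 2*(j:ℝ)) := Real.rpow_pos_of_pos hx _
  have hJ := J_le (γ := γ) hγ.le hb hx
  have hxpow : x ^ (2*ν + 2*(j:ℝ) + 1) = x ^ (2*ν + 2*(j:ℝ)) * x := by
    rw [Real.rpow_add hx, Real.rpow_one]
  have hkey : Bc γ ν 0 j * x ^ (2*ν + 2*(j:ℝ)) = x ^ ν * bT ν x j := by
    have hg := g_eq (γ := γ) hν hx j
    have hexp : Real.exp (-γ * x) ≠ 0 := (Real.exp_pos _).ne'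
    apply mul_right_cancel₀ hexp
    linear_combination hg
  rw [Bt0_eq]
  calc Bc γ ν 0 j * Jf γ x (2*ν + 2*(j:ℝ))
      ≤ Bc γ ν 0 j * (x ^ (2*ν + 2*(j:ℝ) + 1) / (2*ν + 2*(j:ℝ) + 1)) :=
        mul_le_mul_of_nonneg_left hJ hBc.le
    _ ≤ Bc γ ν 0 j * (x ^ (2*ν + 2*(j:ℝ)) * (x / (2*ν + 1))) := by
        apply mul_le_mul_of_nonneg_left _ hBc.le
        have hxx : x ≤ x / (2*ν + 1) * (2*ν + 2*(j:ℝ) + 1) := by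
          rw [div_mul_eq_mul_div, le_div_iff₀ (by linarith : (0:ℝ) < 2*ν + 1)]
          nlinarith
        rw [hxpow, div_le_iff₀ (by linarith : (0:ℝ) < 2*ν + 2*(j:ℝ) + 1)]
        calc x ^ (2*ν + 2*(j:ℝ)) * x
            ≤ x ^ (2*ν + 2*(j:ℝ)) * (x / (2*ν + 1) * (2*ν + 2*(j:ℝ) + 1)) :=
              mul_le_mul_of_nonneg_left hxx hxb.le
          _ = x ^ (2*ν + 2*(j:ℝ)) * (x / (2*ν + 1)) * (2*ν + 2*(j:ℝ) + 1) := by ring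
    _ = (x / (2*ν + 1)) * (Bc γ ν 0 j * x ^ (2*ν + 2*(j:ℝ))) := by ring
    _ = (x / (2*ν + 1)) * (x ^ ν * bT ν x j) := by rw [hkey]

lemma Bt0_summable {γ ν x : ℝ} (hγ : 0 < γ) (hν : -(1/2) < ν) (hx : 0 < x) :
    Summable (fun j => Bt γ ν x 0 j) := by
  apply Summable.of_nonneg_of_le (fun j => Bt_nonneg hγ hν hx 0 j) (Bt0_le hγ hν hx)
  exact ((bT_summable (by linarith : (-1:ℝ) < ν) hx).mul_left _).mul_left _

lemma LHS_swap {γ ν x : ℝ} (hγ : 0 < γ) (hν : -(1/2) < ν) (hx : 0 < x) :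
    (∫ t in (0:ℝ)..x, Real.exp (-γ * t) * t ^ ν * besselI ν t) = ∑' j, Bt γ ν x 0 j := by
  have hbj : ∀ j : ℕ, (-1:ℝ) < 2*ν + 2*(j:ℝ) := by
    intro j; have : (0:ℝ) ≤ j := Nat.cast_nonneg j; linarith
  have hint : ∀ j : ℕ, Integrable
      (fun t => Bc γ ν 0 j * (t ^ (2*ν + 2*(j:ℝ)) * Real.exp (-γ * t)))
      (volume.restrict (Set.Ioc (0:ℝ) x)) :=
    fun j => (J_integrableOn (hbj j) hx).const_mul _
  have hval : ∀ j : ℕ,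
      (∫ t in Set.Ioc (0:ℝ) x, Bc γ ν 0 j * (t ^ (2*ν + 2*(j:ℝ)) * Real.exp (-γ * t)))
        = Bt γ ν x 0 j := by
    intro j
    rw [MeasureTheory.integral_const_mul, Bt0_eq]
    rfl
  have hnormeq : ∀ j : ℕ,
      (∫ t in Set.Ioc (0:ℝ) x, ‖Bc γ ν 0 j * (t ^ (2*ν + 2*(j:ℝ)) * Real.exp (-γ * t))‖)
        = Bt γ ν x 0 j := by
    intro j
    rw [← hval j]
    apply setIntegral_congr_fun measurableSet_Ioc
    intro t ht
    apply Real.norm_of_nonneg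
    have h1 : (0:ℝ) ≤ t ^ (2*ν + 2*(j:ℝ)) := (Real.rpow_pos_of_pos ht.1 _).le
    have h2 := (Bc_pos (γ := γ) hγ hν 0 j).le
    positivity
  have hsum : Summable (fun j =>
      ∫ t in Set.Ioc (0:ℝ) x, ‖Bc γ ν 0 j * (t ^ (2*ν + 2*(j:ℝ)) * Real.exp (-γ * t))‖) := by
    apply Summable.congr (Bt0_summable hγ hν hx)
    intro j; rw [hnormeq j]
  have hswap := MeasureTheory.integral_tsum_of_summable_integral_norm hint hsum
  rw [intervalIntegral.integral_of_le hx.le]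
  calc (∫ t in Set.Ioc (0:ℝ) x, Real.exp (-γ * t) * t ^ ν * besselI ν t)
      = ∫ t in Set.Ioc (0:ℝ) x,
          ∑' j : ℕ, Bc γ ν 0 j * (t ^ (2*ν + 2*(j:ℝ)) * Real.exp (-γ * t)) := by
        apply setIntegral_congr_fun measurableSet_Ioc
        intro t ht
        show Real.exp (-γ * t) * t ^ ν * besselI ν t
          = ∑' j : ℕ, Bc γ ν 0 j * (t ^ (2*ν + 2*(j:ℝ)) * Real.exp (-γ * t))
        have h1 : ∑' j : ℕ, Bc γ ν 0 j * (t ^ (2*ν + 2*(j:ℝ)) * Real.exp (-γ * t))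
            = ∑' j : ℕ, (Real.exp (-γ * t) * t ^ ν) * bT ν t j :=
          tsum_congr (fun j => g_eq hν ht.1 j)
        rw [h1, tsum_mul_left, ← besselI_eq_tsum]
    _ = ∑' j : ℕ, ∫ t in Set.Ioc (0:ℝ) x,
          Bc γ ν 0 j * (t ^ (2*ν + 2*(j:ℝ)) * Real.exp (-γ * t)) := hswap.symm
    _ = ∑' j, Bt γ ν x 0 j := tsum_congr hval

theorem stmt_3 (γ ν : ℝ) (hγ0 : 0 < γ) (hγ1 : γ < 1) (hν : -(1/2) < ν) (x : ℝ) (hx : 0 < x) :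
    Summable (fun k : ℕ => γ ^ k * besselI (ν + (k : ℝ) + 1) x) ∧
      ∫ t in (0 : ℝ)..x, Real.exp (-γ * t) * t ^ ν * besselI ν t >
        Real.exp (-γ * x) * x ^ ν * ∑' k : ℕ, γ ^ k * besselI (ν + (k : ℝ) + 1) x := by
  refine ⟨summable1 hγ0 hν hx, ?_⟩
  have hEcol_nonneg : ∀ j : ℕ, 0 ≤ ∑' k, Et γ ν x k j :=
    fun j => tsum_nonneg (fun k => Et_nonneg hγ0 hν hx k j)
  have hEcol_le : ∀ j : ℕ, (∑' k, Et γ ν x k j) ≤ Bt γ ν x 0 j := by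
    intro j
    have h := col_tsum hγ0 hν hx j
    have hT : 0 ≤ ∑' k, Tm γ ν x k j := tsum_nonneg (fun k => (Tm_pos hγ0 hν hx k j).le)
    linarith
  have hEsummable : Summable (fun j => ∑' k, Et γ ν x k j) :=
    Summable.of_nonneg_of_le hEcol_nonneg hEcol_le (Bt0_summable hγ0 hν hx)
  have hRHS : Real.exp (-γ * x) * x ^ ν * ∑' k : ℕ, γ ^ k * besselI (ν + (k:ℝ) + 1) x
      = (∑' j, Bt γ ν x 0 j) - ∑' j, ∑' k, Et γ ν x k j := by
    rw [RHS_swap hγ0 hν hx, tsum_congr (fun j => col_tsum hγ0 hν hx j),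
      Summable.tsum_sub (Bt0_summable hγ0 hν hx) hEsummable]
  have hEpos : 0 < ∑' j, ∑' k, Et γ ν x k j := by
    apply Summable.tsum_pos hEsummable hEcol_nonneg 0
    apply Summable.tsum_pos (Et_summable_k hγ0 hν hx 0) (fun k => Et_nonneg hγ0 hν hx k 0) 0
    have hJ := J_pos (γ := γ) (expo_gt hν 0 0) hx
    have hA := Ac_pos (γ := γ) hγ0 hν 0 0
    unfold Et
    positivity
  rw [gt_iff_lt, hRHS, LHS_swap hγ0 hν hx]
  linarith
end

section
/- Let 0 < γ < 1 and ν > 1/2. Then for all x > 0, ∫_0^x e^{−γt} t^ν I_ν(t) dt > (1/(1−γ)) · ( 1 − 4ν(2ν+5) / ((2ν−1)(1−γ)x) ) · e^{−γx} x^ν I_ν(x). -/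
open Real MeasureTheory

/-- single term of the series -/
noncomputable def bterm (ν : ℝ) (k : ℕ) (t : ℝ) : ℝ :=
  (t / 2) ^ (ν + 2 * (k : ℝ)) / (Real.Gamma (ν + (k : ℝ) + 1) * (Nat.factorial k : ℝ))

lemma besselI_eq (ν t : ℝ) : besselI ν t = ∑' k, bterm ν k t := rfl

/-- coefficient normal form -/
noncomputable def bco (ν : ℝ) (k : ℕ) : ℝ :=
  ((2:ℝ) ^ (ν + 2 * (k : ℝ)) * (Real.Gamma (ν + (k : ℝ) + 1) * (Nat.factorial k : ℝ)))⁻¹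

lemma gamma_arg_pos (ν : ℝ) (hν : -1 < ν) (k : ℕ) : 0 < ν + (k : ℝ) + 1 := by
  have : (0:ℝ) ≤ k := Nat.cast_nonneg k
  linarith

lemma gamma_pos (ν : ℝ) (hν : -1 < ν) (k : ℕ) : 0 < Real.Gamma (ν + (k : ℝ) + 1) :=
  Real.Gamma_pos_of_pos (gamma_arg_pos ν hν k)

lemma bco_pos (ν : ℝ) (hν : -1 < ν) (k : ℕ) : 0 < bco ν k := by
  have h1 : (0:ℝ) < (2:ℝ) ^ (ν + 2 * (k : ℝ)) := Real.rpow_pos_of_pos (by norm_num) _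
  have h2 := gamma_pos ν hν k
  have h3 : (0:ℝ) < (Nat.factorial k : ℝ) := by exact_mod_cast Nat.factorial_pos k
  exact inv_pos.mpr (by positivity)

lemma bterm_eq (ν : ℝ) (k : ℕ) {t : ℝ} (ht : 0 < t) :
    bterm ν k t = bco ν k * t ^ (ν + 2 * (k : ℝ)) := by
  unfold bterm bco
  rw [div_rpow ht.le (by norm_num)]
  field_simp

lemma bterm_pos (ν : ℝ) (hν : -1 < ν) (k : ℕ) {t : ℝ} (ht : 0 < t) : 0 < bterm ν k t := by
  rw [bterm_eq ν k ht]
  exact mul_pos (bco_pos ν hν k) (Real.rpow_pos_of_pos ht _)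

lemma bterm_nonneg (ν : ℝ) (hν : -1 < ν) (k : ℕ) {t : ℝ} (ht : 0 < t) : 0 ≤ bterm ν k t :=
  (bterm_pos ν hν k ht).le

lemma gamma_lower (ν : ℝ) (hν : -1/2 ≤ ν) (k : ℕ) :
    Real.Gamma (ν + 1) ≤ 2 ^ k * Real.Gamma (ν + (k : ℝ) + 1) := by
  induction k with
  | zero => simp
  | succ n ih =>
    have hpos : 0 < Real.Gamma (ν + (n : ℝ) + 1) := gamma_pos ν (by linarith) n
    have harg : (ν + (n:ℝ) + 1) ≠ 0 := (gamma_arg_pos ν (by linarith) n).ne'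
    have key : Real.Gamma (ν + ((n:ℕ)+1 : ℕ) + 1) = (ν + (n:ℝ) + 1) * Real.Gamma (ν + (n:ℝ) + 1) := by
      rw [show (ν + (((n:ℕ)+1 : ℕ)) + 1 : ℝ) = (ν + (n:ℝ) + 1) + 1 by push_cast; ring]
      exact Real.Gamma_add_one harg
    rw [key]
    have h2 : (1:ℝ)/2 ≤ ν + (n:ℝ) + 1 := by
      have : (0:ℝ) ≤ n := Nat.cast_nonneg n
      linarith
    have := ih
    calc Real.Gamma (ν + 1) ≤ 2 ^ n * Real.Gamma (ν + (n : ℝ) + 1) := ih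
      _ ≤ 2 ^ (n+1) * ((ν + (n:ℝ) + 1) * Real.Gamma (ν + (n:ℝ) + 1)) := by
          have h1 : (1:ℝ) ≤ 2 * (ν + (n:ℝ) + 1) := by linarith
          have h2n : (0:ℝ) < (2:ℝ)^n := pow_pos two_pos n
          calc 2 ^ n * Real.Gamma (ν + (n:ℝ) + 1) = 2^n * (1 * Real.Gamma (ν + (n:ℝ) + 1)) := by ring
            _ ≤ 2^n * ((2*(ν + (n:ℝ) + 1)) * Real.Gamma (ν + (n:ℝ) + 1)) := by
                apply mul_le_mul_of_nonneg_left _ h2n.le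
                exact mul_le_mul_of_nonneg_right h1 hpos.le
            _ = 2^(n+1) * ((ν + (n:ℝ) + 1) * Real.Gamma (ν + (n:ℝ) + 1)) := by ring

lemma bterm_summable (ν : ℝ) (hν : -1/2 < ν) {t : ℝ} (ht : 0 < t) :
    Summable (fun k => bterm ν k t) := by
  have hy : (0:ℝ) < t / 2 := by linarith
  have hG1 : 0 < Real.Gamma (ν + 1) := Real.Gamma_pos_of_pos (by linarith)
  refine Summable.of_nonneg_of_le
    (f := fun k => ((t/2) ^ ν / Real.Gamma (ν + 1)) * ((2 * (t/2)^2) ^ k / (Nat.factorial k : ℝ)))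
    (fun k => (bterm_pos ν (by linarith) k ht).le) (fun k => ?_)
    ((Real.summable_pow_div_factorial (2 * (t/2)^2)).mul_left _)
  have hsplit : (t/2) ^ (ν + 2 * (k:ℝ)) = (t/2) ^ ν * ((t/2)^2) ^ k := by
    rw [Real.rpow_add hy, show (2 * (k:ℝ)) = ((2*k : ℕ) : ℝ) by push_cast; ring,
      Real.rpow_natCast, pow_mul]
  have hfac : (0:ℝ) < (Nat.factorial k : ℝ) := by exact_mod_cast Nat.factorial_pos k
  have hGk := gamma_pos ν (by linarith) k
  have hG1' := hG1
  have hglow := gamma_lower ν hν.le k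
  have ha : (0:ℝ) ≤ (t/2)^ν := (Real.rpow_pos_of_pos hy ν).le
  have hb : (0:ℝ) ≤ ((t/2)^2)^k := by positivity
  unfold bterm
  rw [hsplit, mul_pow, div_mul_div_comm, div_le_div_iff₀ (by positivity) (by positivity)]
  have hmul := mul_le_mul_of_nonneg_left hglow (mul_nonneg (mul_nonneg ha hb) hfac.le)
  nlinarith [hmul]

lemma besselI_pos_s7 (ν : ℝ) (hν : -1/2 < ν) {t : ℝ} (ht : 0 < t) : 0 < besselI ν t := by
  rw [besselI_eq]
  exact Summable.tsum_pos (bterm_summable ν hν ht) (fun k => (bterm_pos ν (by linarith) k ht).le) 0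
    (bterm_pos ν (by linarith) 0 ht)

lemma besselI_nonneg (ν : ℝ) (hν : -1/2 < ν) {t : ℝ} (ht : 0 < t) : 0 ≤ besselI ν t :=
  (besselI_pos_s7 ν hν ht).le
-- recurrence: I_{ν-1}(t) = (2ν/t) I_ν(t) + I_{ν+1}(t)
lemma bterm_zero (ν : ℝ) (hν : 1/2 < ν) {t : ℝ} (ht : 0 < t) :
    bterm (ν-1) 0 t = 2 * ν / t * bterm ν 0 t := by
  have hνne : ν ≠ 0 := by positivity
  have hG : Real.Gamma (ν + 1) = ν * Real.Gamma ν := Real.Gamma_add_one hνne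
  have hGνpos : 0 < Real.Gamma ν := Real.Gamma_pos_of_pos (by linarith)
  rw [bterm_eq _ _ ht, bterm_eq _ _ ht]
  unfold bco
  simp only [Nat.cast_zero, Nat.factorial_zero, Nat.cast_one, mul_one, mul_zero, add_zero]
  rw [show ν - 1 + 1 = ν by ring, hG]
  have h2 : (0:ℝ) < 2 := by norm_num
  have h2ν : ((2:ℝ) ^ (ν-1))⁻¹ = 2 * ((2:ℝ)^ν)⁻¹ := by
    rw [Real.rpow_sub h2, Real.rpow_one]
    field_simp
  have htν : t ^ (ν - 1) = t ^ ν / t := by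
    rw [Real.rpow_sub ht, Real.rpow_one]
  rw [mul_inv, h2ν, htν]
  have h2p : (0:ℝ) < (2:ℝ)^ν := Real.rpow_pos_of_pos h2 ν
  have htp : (0:ℝ) < t ^ ν := Real.rpow_pos_of_pos ht ν
  field_simp

lemma bterm_succ (ν : ℝ) (hν : 1/2 < ν) (k : ℕ) {t : ℝ} (ht : 0 < t) :
    bterm (ν-1) (k+1) t - 2 * ν / t * bterm ν (k+1) t = bterm (ν+1) k t := by
  have h2 : (0:ℝ) < 2 := by norm_num
  have hGk1 : 0 < Real.Gamma (ν + (k:ℝ) + 1) := gamma_pos ν (by linarith) k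
  have hGk2 : Real.Gamma (ν + (k:ℝ) + 1 + 1) = (ν + (k:ℝ) + 1) * Real.Gamma (ν + (k:ℝ) + 1) :=
    Real.Gamma_add_one (by positivity)
  rw [bterm_eq _ _ ht, bterm_eq _ _ ht, bterm_eq _ _ ht]
  unfold bco
  have e1 : ν - 1 + 2 * ((k:ℝ)+1) = ν + 1 + 2*(k:ℝ) := by ring
  have e2 : ν + 2 * ((k:ℝ)+1) = (ν + 1 + 2*(k:ℝ)) + 1 := by ring
  have e3 : ν - 1 + ((k:ℝ)+1) + 1 = ν + (k:ℝ) + 1 := by ring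
  have e4 : ν + ((k:ℝ)+1) + 1 = ν + (k:ℝ) + 1 + 1 := by ring
  push_cast
  rw [e1, e2, e3, e4, hGk2]
  have hfs : ((k+1).factorial : ℝ) = ((k:ℝ)+1) * (k.factorial : ℝ) := by
    push_cast [Nat.factorial_succ]; ring
  push_cast [Nat.factorial_succ]
  have htsplit : t ^ (ν + 1 + 2*(k:ℝ) + 1) = t ^ (ν + 1 + 2*(k:ℝ)) * t := by
    rw [Real.rpow_add ht, Real.rpow_one]
  have h2split : (2:ℝ) ^ (ν + 1 + 2*(k:ℝ) + 1) = 2 * (2:ℝ) ^ (ν + 1 + 2*(k:ℝ)) := by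
    rw [Real.rpow_add h2, Real.rpow_one]; ring
  have e5 : ν + 1 + (k:ℝ) + 1 = ν + (k:ℝ) + 1 + 1 := by ring
  rw [e5, hGk2, htsplit, h2split]
  have h2p : (0:ℝ) < (2:ℝ) ^ (ν + 1 + 2*(k:ℝ)) := Real.rpow_pos_of_pos h2 _
  have htp : (0:ℝ) < t ^ (ν + 1 + 2*(k:ℝ)) := Real.rpow_pos_of_pos ht _
  have hfp : (0:ℝ) < (k.factorial : ℝ) := by exact_mod_cast Nat.factorial_pos k
  have hνk : (0:ℝ) < ν + (k:ℝ) + 1 := by positivity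
  field_simp
  ring

lemma besselI_recurrence (ν : ℝ) (hν : 1/2 < ν) {t : ℝ} (ht : 0 < t) :
    besselI (ν-1) t = 2 * ν / t * besselI ν t + besselI (ν+1) t := by
  have hs1 : Summable (fun k => bterm (ν-1) k t) := bterm_summable (ν-1) (by linarith) ht
  have hs2 : Summable (fun k => bterm ν k t) := bterm_summable ν (by linarith) ht
  have hs2' : Summable (fun k => 2 * ν / t * bterm ν k t) := hs2.mul_left _
  have hs3 : Summable (fun k => bterm (ν-1) k t - 2 * ν / t * bterm ν k t) := hs1.sub hs2'
  have key : ∑' k, (bterm (ν-1) k t - 2 * ν / t * bterm ν k t) = besselI (ν+1) t := by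
    rw [Summable.tsum_eq_zero_add hs3]
    have h0 : bterm (ν-1) 0 t - 2 * ν / t * bterm ν 0 t = 0 := by
      rw [bterm_zero ν hν ht]; ring
    rw [h0, zero_add, besselI_eq]
    exact tsum_congr (fun k => bterm_succ ν hν k ht)
  have hsub : ∑' k, (bterm (ν-1) k t - 2 * ν / t * bterm ν k t)
      = (∑' k, bterm (ν-1) k t) - 2 * ν / t * (∑' k, bterm ν k t) := by
    rw [Summable.tsum_sub hs1 hs2', tsum_mul_left]
  rw [besselI_eq (ν-1), besselI_eq ν]
  have hfin := key.symm.trans hsub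
  linarith

-- I_{ν+1}(t) ≤ I_ν(t)
lemma besselI_succ_le_s7 (ν : ℝ) (hν : 1/2 < ν) {t : ℝ} (ht : 0 < t) :
    besselI (ν+1) t ≤ besselI ν t := by
  have hy : (0:ℝ) < t/2 := by linarith
  have hsν : Summable (fun k => bterm ν k t) := bterm_summable ν (by linarith) ht
  have hsa : Summable (fun k => bterm ν k t / 2) := hsν.div_const 2
  have hsb : Summable (fun k => bterm ν (k+1) t / 2) :=
    ((summable_nat_add_iff 1).mpr hsν).div_const 2
  have hkey : ∀ k, bterm (ν+1) k t ≤ bterm ν k t / 2 + bterm ν (k+1) t / 2 := by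
    intro k
    have hGk1 : 0 < Real.Gamma (ν + (k:ℝ) + 1) := gamma_pos ν (by linarith) k
    have hGk2 : Real.Gamma (ν + (k:ℝ) + 1 + 1) = (ν + (k:ℝ) + 1) * Real.Gamma (ν + (k:ℝ) + 1) :=
      Real.Gamma_add_one (by positivity)
    have hfp : (0:ℝ) < (k.factorial : ℝ) := by exact_mod_cast Nat.factorial_pos k
    have hfs : ((k+1).factorial : ℝ) = ((k:ℝ)+1) * (k.factorial : ℝ) := by
      push_cast [Nat.factorial_succ]; ring
    have hc : (0:ℝ) < ν + (k:ℝ) + 1 := by positivity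
    have hK : (0:ℝ) < (k:ℝ) + 1 := by positivity
    have hX : (0:ℝ) < (t/2) ^ (ν + 2*(k:ℝ)) := Real.rpow_pos_of_pos hy _
    have hD : (0:ℝ) < 2*((ν + (k:ℝ) + 1) * Real.Gamma (ν + (k:ℝ) + 1) * (((k:ℝ)+1) * (k.factorial:ℝ))) := by
      positivity
    -- numerator inequality from AM-GM
    have hnum : (t/2) ^ (ν + 2*(k:ℝ)) * (t/2) * (2*((k:ℝ)+1))
        ≤ (t/2) ^ (ν + 2*(k:ℝ)) * ((ν + (k:ℝ) + 1) * ((k:ℝ)+1)) + (t/2) ^ (ν + 2*(k:ℝ)) * (t/2)^2 := by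
      have h1 : (0:ℝ) ≤ (t/2) ^ (ν + 2*(k:ℝ)) * (((k:ℝ)+1) * ((t/2) - (ν + (k:ℝ) + 1))^2) := by positivity
      have h2 : (0:ℝ) ≤ (t/2) ^ (ν + 2*(k:ℝ)) * ((t/2)^2 * ((ν + (k:ℝ) + 1) - ((k:ℝ)+1))) := by
        have : (0:ℝ) ≤ (ν + (k:ℝ) + 1) - ((k:ℝ)+1) := by linarith
        positivity
      have hstep : (t/2) ^ (ν + 2*(k:ℝ)) * (t/2) * (2*((k:ℝ)+1)) * (ν + (k:ℝ) + 1)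
          ≤ ((t/2) ^ (ν + 2*(k:ℝ)) * ((ν + (k:ℝ) + 1) * ((k:ℝ)+1)) + (t/2) ^ (ν + 2*(k:ℝ)) * (t/2)^2) * (ν + (k:ℝ) + 1) := by
        nlinarith [h1, h2]
      exact le_of_mul_le_mul_right hstep hc
    -- express the three terms over the common denominator
    have e_u : bterm (ν+1) k t =
        (t/2) ^ (ν + 2*(k:ℝ)) * (t/2) * (2*((k:ℝ)+1)) /
          (2*((ν + (k:ℝ) + 1) * Real.Gamma (ν + (k:ℝ) + 1) * (((k:ℝ)+1) * (k.factorial:ℝ)))) := by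
      unfold bterm
      rw [show ν + 1 + 2*(k:ℝ) = (ν + 2*(k:ℝ)) + 1 by ring, Real.rpow_add hy, Real.rpow_one,
        show ν + 1 + (k:ℝ) + 1 = (ν + (k:ℝ) + 1) + 1 by ring, Real.Gamma_add_one hc.ne']
      field_simp
    have e_a : bterm ν k t / 2 =
        (t/2) ^ (ν + 2*(k:ℝ)) * ((ν + (k:ℝ) + 1) * ((k:ℝ)+1)) /
          (2*((ν + (k:ℝ) + 1) * Real.Gamma (ν + (k:ℝ) + 1) * (((k:ℝ)+1) * (k.factorial:ℝ)))) := by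
      unfold bterm
      field_simp
    have e_b : bterm ν (k+1) t / 2 =
        (t/2) ^ (ν + 2*(k:ℝ)) * (t/2)^2 /
          (2*((ν + (k:ℝ) + 1) * Real.Gamma (ν + (k:ℝ) + 1) * (((k:ℝ)+1) * (k.factorial:ℝ)))) := by
      unfold bterm
      rw [show ν + 2*(((k+1:ℕ)):ℝ) = (ν + 2*(k:ℝ)) + 2 by push_cast; ring]
      rw [show ν + (((k+1:ℕ)):ℝ) + 1 = (ν + (k:ℝ) + 1) + 1 by push_cast; ring]
      rw [Real.rpow_add hy, Real.Gamma_add_one hc.ne', hfs]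
      rw [show ((2:ℝ)) = (((2:ℕ)):ℝ) by norm_num, Real.rpow_natCast]
      field_simp
    rw [e_u, e_a, e_b, ← add_div]
    exact (div_le_div_iff_of_pos_right hD).mpr hnum
  -- sum up
  have hsν1 : Summable (fun k => bterm (ν+1) k t) := bterm_summable (ν+1) (by linarith) ht
  have hb0 : 0 ≤ bterm ν 0 t := bterm_nonneg ν (by linarith) 0 ht
  have hsum1 : besselI (ν+1) t ≤ ∑' k, (bterm ν k t / 2 + bterm ν (k+1) t / 2) := by
    rw [besselI_eq]
    exact Summable.tsum_le_tsum hkey hsν1 (hsa.add hsb)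
  have hsplit : ∑' k, (bterm ν k t / 2 + bterm ν (k+1) t / 2)
      = (∑' k, bterm ν k t / 2) + (∑' k, bterm ν (k+1) t / 2) := Summable.tsum_add hsa hsb
  have hta : ∑' k, bterm ν k t / 2 = besselI ν t / 2 := by
    rw [besselI_eq]; exact tsum_div_const
  have htb : (∑' k, bterm ν (k+1) t / 2) = (besselI ν t - bterm ν 0 t) / 2 := by
    have h1 : ∑' k, bterm ν k t = bterm ν 0 t + ∑' k, bterm ν (k+1) t := Summable.tsum_eq_zero_add hsν
    have h2 : ∑' (k:ℕ), bterm ν (k+1) t / 2 = (∑' (k:ℕ), bterm ν (k+1) t) / 2 := tsum_div_const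
    rw [h2, besselI_eq, h1]
    ring
  rw [hsplit, hta, htb] at hsum1
  linarith
lemma bterm_measurable (ν' : ℝ) (k : ℕ) : Measurable (fun t : ℝ => bterm ν' k t) := by
  unfold bterm
  measurability

lemma besselI_eq_toReal (ν' : ℝ) (hν' : -1/2 < ν') {t : ℝ} (ht : 0 < t) :
    (∑' k, ENNReal.ofReal (bterm ν' k t)).toReal = besselI ν' t := by
  rw [← ENNReal.ofReal_tsum_of_nonneg (fun k => bterm_nonneg ν' (by linarith) k ht)
    (bterm_summable ν' hν' ht), ENNReal.toReal_ofReal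
    (tsum_nonneg (fun k => bterm_nonneg ν' (by linarith) k ht))]
  exact (besselI_eq ν' t).symm

lemma besselI_aesm (ν' : ℝ) (hν' : -1/2 < ν') {a b : ℝ} (ha : 0 ≤ a) :
    AEStronglyMeasurable (fun t => besselI ν' t) (volume.restrict (Set.Ioc a b)) := by
  have hmeas : Measurable (fun t : ℝ => (∑' k, ENNReal.ofReal (bterm ν' k t)).toReal) :=
    (Measurable.ennreal_tsum (fun k => (bterm_measurable ν' k).ennreal_ofReal)).ennreal_toReal
  apply hmeas.aestronglyMeasurable.congr
  rw [Filter.EventuallyEq, ae_restrict_iff' measurableSet_Ioc]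
  filter_upwards with t hmem
  exact besselI_eq_toReal ν' hν' (lt_of_le_of_lt ha hmem.1)

-- monotone bound for t^μ * besselI ν' t
lemma tpow_besselI_mono (μ ν' : ℝ) (hν' : -1/2 < ν') (hμν : 0 ≤ μ + ν') {t x : ℝ}
    (ht : 0 < t) (htx : t ≤ x) :
    t ^ μ * besselI ν' t ≤ x ^ μ * besselI ν' x := by
  have hx : 0 < x := lt_of_lt_of_le ht htx
  have h1 : ∀ k, t ^ μ * bterm ν' k t ≤ x ^ μ * bterm ν' k x := by
    intro k
    rw [bterm_eq _ _ ht, bterm_eq _ _ hx,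
      show t ^ μ * (bco ν' k * t ^ (ν' + 2*(k:ℝ))) = bco ν' k * (t ^ μ * t ^ (ν' + 2*(k:ℝ))) by ring,
      show x ^ μ * (bco ν' k * x ^ (ν' + 2*(k:ℝ))) = bco ν' k * (x ^ μ * x ^ (ν' + 2*(k:ℝ))) by ring,
      ← Real.rpow_add ht, ← Real.rpow_add hx]
    apply mul_le_mul_of_nonneg_left _ (bco_pos ν' (by linarith) k).le
    apply Real.rpow_le_rpow ht.le htx
    have : (0:ℝ) ≤ (k:ℝ) := Nat.cast_nonneg k
    linarith
  have hs1 : Summable (fun k => t ^ μ * bterm ν' k t) := (bterm_summable ν' hν' ht).mul_left _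
  have hs2 : Summable (fun k => x ^ μ * bterm ν' k x) := (bterm_summable ν' hν' hx).mul_left _
  calc t ^ μ * besselI ν' t = ∑' k, t ^ μ * bterm ν' k t := by rw [besselI_eq, tsum_mul_left]
    _ ≤ ∑' k, x ^ μ * bterm ν' k x := Summable.tsum_le_tsum h1 hs1 hs2
    _ = x ^ μ * besselI ν' x := by rw [besselI_eq, tsum_mul_left]

-- integrability of t ↦ c(t) * (t^μ * besselI ν' t) on Ioc a b, for bounded-ish weights
lemma integrableOn_weight_besselI (μ ν' : ℝ) (hν' : -1/2 < ν') (hμν : 0 ≤ μ + ν')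
    {a b : ℝ} (ha : 0 ≤ a) (hab : a ≤ b) (c : ℝ → ℝ) (hc : Measurable c) (C : ℝ)
    (hC : ∀ t ∈ Set.Ioc a b, |c t| ≤ C) :
    IntegrableOn (fun t => c t * (t ^ μ * besselI ν' t)) (Set.Ioc a b) := by
  have hb : 0 < b ∨ Set.Ioc a b = ∅ := by
    rcases le_or_gt b 0 with h | h
    · right
      refine Set.eq_empty_of_forall_notMem (fun t ht => ?_)
      have := lt_of_le_of_lt ha ht.1
      linarith [ht.2]
    · left; exact h
  rcases hb with hb | hempty
  swap
  · rw [IntegrableOn, hempty, Measure.restrict_empty]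
    exact integrable_zero_measure
  have haesm : AEStronglyMeasurable (fun t => c t * (t ^ μ * besselI ν' t))
      (volume.restrict (Set.Ioc a b)) := by
    refine AEStronglyMeasurable.mul (hc.aestronglyMeasurable) ?_
    have hm : Measurable (fun t : ℝ => t ^ μ) := by measurability
    exact (hm.aestronglyMeasurable).mul (besselI_aesm ν' hν' ha)
  refine Integrable.mono' (g := fun _ => C * (b ^ μ * besselI ν' b))
    (integrable_const _) haesm ?_
  rw [ae_restrict_iff' measurableSet_Ioc]
  filter_upwards with t hmem
  have ht0 : 0 < t := lt_of_le_of_lt ha hmem.1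
  have h1 : 0 ≤ t ^ μ * besselI ν' t :=
    mul_nonneg (Real.rpow_pos_of_pos ht0 μ).le (besselI_nonneg ν' hν' ht0)
  have h2 : t ^ μ * besselI ν' t ≤ b ^ μ * besselI ν' b :=
    tpow_besselI_mono μ ν' hν' hμν ht0 hmem.2
  have h3 := hC t hmem
  have hCpos : 0 ≤ C := le_trans (abs_nonneg _) h3
  rw [norm_mul, Real.norm_eq_abs, Real.norm_eq_abs, abs_of_nonneg h1]
  exact mul_le_mul h3 h2 h1 hCpos
noncomputable def psi (γ A ν : ℝ) (k : ℕ) (t : ℝ) : ℝ :=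
  (A/t^2 * Real.exp (-γ*t) - (1 - A/t) * (γ * Real.exp (-γ*t))) * (t ^ ν * bterm ν k t)
    + ((1 - A/t) * Real.exp (-γ*t)) * (t ^ ν * bterm (ν-1) k t)

lemma bco_step (ν : ℝ) (hν : 1/2 < ν) (k : ℕ) :
    bco ν k * (2*ν + 2*(k:ℝ)) = bco (ν-1) k := by
  unfold bco
  have hk : (0:ℝ) ≤ (k:ℝ) := Nat.cast_nonneg k
  have hνk : (0:ℝ) < ν + (k:ℝ) := by linarith
  have hG : Real.Gamma (ν + (k:ℝ) + 1) = (ν + (k:ℝ)) * Real.Gamma (ν + (k:ℝ)) := by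
    rw [show ν + (k:ℝ) + 1 = (ν + (k:ℝ)) + 1 by ring]
    exact Real.Gamma_add_one hνk.ne'
  have hGpos : 0 < Real.Gamma (ν + (k:ℝ)) := Real.Gamma_pos_of_pos hνk
  have e1 : ν - 1 + (k:ℝ) + 1 = ν + (k:ℝ) := by ring
  rw [e1, hG]
  have h2 : (2:ℝ) ^ (ν + 2*(k:ℝ)) = 2 * (2:ℝ) ^ (ν - 1 + 2*(k:ℝ)) := by
    rw [show ν + 2*(k:ℝ) = (ν - 1 + 2*(k:ℝ)) + 1 by ring, Real.rpow_add (by norm_num),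
      Real.rpow_one]
    ring
  rw [h2]
  have h2p : (0:ℝ) < (2:ℝ) ^ (ν - 1 + 2*(k:ℝ)) := Real.rpow_pos_of_pos (by norm_num) _
  have hfp : (0:ℝ) < (k.factorial : ℝ) := by exact_mod_cast Nat.factorial_pos k
  field_simp

lemma tpow_bterm_prev (ν : ℝ) (hν : 1/2 < ν) (k : ℕ) {t : ℝ} (ht : 0 < t) :
    t ^ ν * bterm (ν-1) k t = bco ν k * ((2*ν + 2*(k:ℝ)) * t ^ (2*ν + 2*(k:ℝ) - 1)) := by
  rw [bterm_eq _ _ ht]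
  have : t ^ ν * (bco (ν-1) k * t ^ (ν - 1 + 2*(k:ℝ))) = bco (ν-1) k * (t ^ ν * t ^ (ν - 1 + 2*(k:ℝ))) := by ring
  rw [this, ← Real.rpow_add ht, show ν + (ν - 1 + 2*(k:ℝ)) = 2*ν + 2*(k:ℝ) - 1 by ring,
    ← bco_step ν hν k]
  ring

lemma hasDerivAt_term (ν : ℝ) (hν : 1/2 < ν) (k : ℕ) {t : ℝ} (ht : 0 < t) :
    HasDerivAt (fun s => s ^ ν * bterm ν k s) (t ^ ν * bterm (ν-1) k t) t := by
  have hrp : HasDerivAt (fun s : ℝ => s ^ (2*ν + 2*(k:ℝ)))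
      ((2*ν + 2*(k:ℝ)) * t ^ (2*ν + 2*(k:ℝ) - 1)) t :=
    Real.hasDerivAt_rpow_const (Or.inl ht.ne')
  have h4 := hrp.const_mul (bco ν k)
  have hev : (fun s => s ^ ν * bterm ν k s) =ᶠ[nhds t] (fun s => bco ν k * s ^ (2*ν + 2*(k:ℝ))) := by
    filter_upwards [eventually_gt_nhds ht] with s hs
    rw [bterm_eq ν k hs,
      show s ^ ν * (bco ν k * s ^ (ν + 2*(k:ℝ))) = bco ν k * (s ^ ν * s ^ (ν + 2*(k:ℝ))) from by ring,
      ← Real.rpow_add hs, show ν + (ν + 2*(k:ℝ)) = 2*ν + 2*(k:ℝ) by ring]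
  rw [tpow_bterm_prev ν hν k ht]
  exact h4.congr_of_eventuallyEq hev

lemma psi_measurable (γ A ν : ℝ) (k : ℕ) : Measurable (psi γ A ν k) := by
  have mexp : Measurable fun t : ℝ => Real.exp (-γ*t) :=
    ((measurable_id.const_mul (-γ)).exp)
  have minv : Measurable fun t : ℝ => A/t^2 := measurable_const.div (measurable_id.pow_const 2)
  have mdiv : Measurable fun t : ℝ => 1 - A/t :=
    measurable_const.sub (measurable_const.div measurable_id)
  have mtpow : Measurable fun t : ℝ => t ^ ν := by measurability
  exact (((minv.mul mexp).sub (mdiv.mul (mexp.const_mul γ))).mul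
      (mtpow.mul (bterm_measurable ν k))).add
    ((mdiv.mul mexp).mul (mtpow.mul (bterm_measurable (ν-1) k)))
lemma hasDerivAt_phi (γ A ν : ℝ) (hν : 1/2 < ν) (k : ℕ) {t : ℝ} (ht : 0 < t) :
    HasDerivAt (fun s => (1 - A/s) * (Real.exp (-γ*s) * (s ^ ν * bterm ν k s)))
      (psi γ A ν k t) t := by
  have h1 : HasDerivAt (fun s : ℝ => 1 - A/s) (A/t^2) t := by
    have hinv := (hasDerivAt_inv ht.ne').const_mul A
    have h1' := hinv.const_sub 1
    have : 1 - A * t⁻¹ = 1 - A / t := by ring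
    simp only [div_eq_mul_inv]
    refine h1'.congr_deriv ?_
    ring
  have hlin : HasDerivAt (fun s : ℝ => -γ*s) (-γ) t := by
    simpa using (hasDerivAt_id t).const_mul (-γ)
  have h2 : HasDerivAt (fun s => Real.exp (-γ*s)) (Real.exp (-γ*t) * (-γ)) t :=
    (Real.hasDerivAt_exp (-γ*t)).comp t hlin
  have h3 := hasDerivAt_term ν hν k ht
  have h23 := h2.mul h3
  have h123 := h1.mul h23
  refine h123.congr_deriv ?_
  simp only [Pi.mul_apply]
  unfold psi
  ring

lemma ftc_term (γ A ν : ℝ) (hν : 1/2 < ν) {x : ℝ} (hA : 0 < A) (hAx : A ≤ x) (k : ℕ) :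
    ∫ t in Set.Ioc A x, psi γ A ν k t
      = (1 - A/x) * (Real.exp (-γ*x) * (x ^ ν * bterm ν k x)) := by
  have huIcc : Set.uIcc A x = Set.Icc A x := Set.uIcc_of_le hAx
  have hpos : ∀ t ∈ Set.uIcc A x, 0 < t := by
    intro t htm
    rw [huIcc] at htm
    exact lt_of_lt_of_le hA htm.1
  have hderiv : ∀ t ∈ Set.uIcc A x,
      HasDerivAt (fun s => (1 - A/s) * (Real.exp (-γ*s) * (s ^ ν * bterm ν k s)))
        (psi γ A ν k t) t := fun t htm => hasDerivAt_phi γ A ν hν k (hpos t htm)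
  have hcont : ContinuousOn (psi γ A ν k) (Set.uIcc A x) := by
    intro t htm
    have ht : 0 < t := hpos t htm
    apply ContinuousAt.continuousWithinAt
    have hb : ∀ ν' : ℝ, ContinuousAt (fun s : ℝ => bterm ν' k s) t := by
      intro ν'
      unfold bterm
      apply ContinuousAt.div_const
      exact (Real.continuousAt_rpow_const _ _ (Or.inl (by positivity))).comp
        ((continuous_id.div_const 2).continuousAt)
    have htp : ContinuousAt (fun s : ℝ => s ^ ν) t :=
      Real.continuousAt_rpow_const _ _ (Or.inl ht.ne')
    have hexp : ContinuousAt (fun s : ℝ => Real.exp (-γ*s)) t :=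
      (Real.continuous_exp.comp (continuous_const.mul continuous_id)).continuousAt
    have hAt2 : ContinuousAt (fun s : ℝ => A/s^2) t :=
      ContinuousAt.div continuousAt_const ((continuous_pow 2).continuousAt) (by positivity)
    have hAt : ContinuousAt (fun s : ℝ => 1 - A/s) t :=
      ContinuousAt.sub continuousAt_const (ContinuousAt.div continuousAt_const continuousAt_id ht.ne')
    exact (((hAt2.mul hexp).sub (hAt.mul (continuousAt_const.mul hexp))).mul
        (htp.mul (hb ν))).add ((hAt.mul hexp).mul (htp.mul (hb (ν-1))))
  have hint : IntervalIntegrable (psi γ A ν k) volume A x := hcont.intervalIntegrable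
  have := intervalIntegral.integral_eq_sub_of_hasDerivAt hderiv hint
  rw [intervalIntegral.integral_of_le hAx] at this
  rw [this, div_self hA.ne']
  simp
lemma tpow_bterm_mono (μ ν' : ℝ) (hν' : -1 < ν') (hμν : 0 ≤ μ + ν') (k : ℕ) {t x : ℝ}
    (ht : 0 < t) (htx : t ≤ x) :
    t ^ μ * bterm ν' k t ≤ x ^ μ * bterm ν' k x := by
  have hx : 0 < x := lt_of_lt_of_le ht htx
  rw [bterm_eq _ _ ht, bterm_eq _ _ hx,
    show t ^ μ * (bco ν' k * t ^ (ν' + 2*(k:ℝ))) = bco ν' k * (t ^ μ * t ^ (ν' + 2*(k:ℝ))) by ring,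
    show x ^ μ * (bco ν' k * x ^ (ν' + 2*(k:ℝ))) = bco ν' k * (x ^ μ * x ^ (ν' + 2*(k:ℝ))) by ring,
    ← Real.rpow_add ht, ← Real.rpow_add hx]
  apply mul_le_mul_of_nonneg_left _ (bco_pos ν' hν' k).le
  apply Real.rpow_le_rpow ht.le htx
  have : (0:ℝ) ≤ (k:ℝ) := Nat.cast_nonneg k
  linarith

lemma exp_le_one' (γ : ℝ) (hγ0 : 0 < γ) {t : ℝ} (ht : 0 < t) : Real.exp (-γ*t) ≤ 1 := by
  apply Real.exp_le_one_iff.mpr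
  nlinarith

lemma c1_bound (γ A : ℝ) (hγ0 : 0 < γ) (hA : 0 < A) {t : ℝ} (htA : A ≤ t) :
    |A/t^2 * Real.exp (-γ*t) - (1 - A/t)*(γ*Real.exp (-γ*t))| ≤ 1/A + γ := by
  have ht0 : 0 < t := lt_of_lt_of_le hA htA
  have he0 : 0 < Real.exp (-γ*t) := Real.exp_pos _
  have he1 : Real.exp (-γ*t) ≤ 1 := exp_le_one' γ hγ0 ht0
  have hAt : A/t ≤ 1 := (div_le_one ht0).mpr htA
  have hAt0 : 0 < A/t := div_pos hA ht0
  have h1 : A/t^2 * Real.exp (-γ*t) ≤ 1/A := by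
    have h2 : A/t^2 ≤ A/A^2 := by
      apply div_le_div_of_nonneg_left hA.le (by positivity)
      nlinarith
    have h3 : A/A^2 = 1/A := by field_simp
    nlinarith [mul_pos (div_pos hA (by positivity : (0:ℝ) < t^2)) he0,
      div_pos hA (show (0:ℝ) < t^2 by positivity)]
  have e1 : 0 ≤ 1 - A/t := by linarith
  have h4 : (1 - A/t)*(γ*Real.exp (-γ*t)) ≤ γ := by
    have e2 : (1-A/t) * (γ * Real.exp (-γ*t)) ≤ 1 * (γ * Real.exp (-γ*t)) :=
      mul_le_mul_of_nonneg_right (by linarith) (by positivity)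
    have e3 : γ * Real.exp (-γ*t) ≤ γ * 1 := mul_le_mul_of_nonneg_left he1 hγ0.le
    linarith
  have h5 : 0 ≤ A/t^2 * Real.exp (-γ*t) := by positivity
  have h6 : 0 ≤ (1 - A/t)*(γ*Real.exp (-γ*t)) := mul_nonneg e1 (by positivity)
  rw [abs_le]
  constructor <;> nlinarith

lemma c2_bound (γ A : ℝ) (hγ0 : 0 < γ) (hA : 0 < A) {t : ℝ} (htA : A ≤ t) :
    |(1 - A/t) * Real.exp (-γ*t)| ≤ 1 := by
  have ht0 : 0 < t := lt_of_lt_of_le hA htA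
  have he0 : 0 < Real.exp (-γ*t) := Real.exp_pos _
  have he1 : Real.exp (-γ*t) ≤ 1 := exp_le_one' γ hγ0 ht0
  have hAt : A/t ≤ 1 := (div_le_one ht0).mpr htA
  have hAt0 : 0 < A/t := div_pos hA ht0
  rw [abs_le]
  constructor <;> nlinarith

lemma psi_norm_bound (γ A ν : ℝ) (hγ0 : 0 < γ) (hν : 1/2 < ν) (hA : 0 < A) (k : ℕ)
    {t x : ℝ} (htA : A ≤ t) (htx : t ≤ x) :
    ‖psi γ A ν k t‖ ≤ (1/A + γ) * (x ^ ν * bterm ν k x) + x ^ ν * bterm (ν-1) k x := by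
  have ht0 : 0 < t := lt_of_lt_of_le hA htA
  have hx0 : 0 < x := lt_of_lt_of_le ht0 htx
  have hm1 : t ^ ν * bterm ν k t ≤ x ^ ν * bterm ν k x :=
    tpow_bterm_mono ν ν (by linarith) (by linarith) k ht0 htx
  have hm2 : t ^ ν * bterm (ν-1) k t ≤ x ^ ν * bterm (ν-1) k x :=
    tpow_bterm_mono ν (ν-1) (by linarith) (by linarith) k ht0 htx
  have hn1 : 0 ≤ t ^ ν * bterm ν k t := by
    have := bterm_nonneg ν (by linarith) k ht0
    positivity
  have hn2 : 0 ≤ t ^ ν * bterm (ν-1) k t := by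
    have := bterm_nonneg (ν-1) (by linarith) k ht0
    positivity
  have hc1 := c1_bound γ A hγ0 hA htA
  have hc2 := c2_bound γ A hγ0 hA htA
  unfold psi
  calc ‖(A/t^2 * Real.exp (-γ*t) - (1 - A/t)*(γ*Real.exp (-γ*t))) * (t ^ ν * bterm ν k t)
        + ((1 - A/t) * Real.exp (-γ*t)) * (t ^ ν * bterm (ν-1) k t)‖
      ≤ ‖(A/t^2 * Real.exp (-γ*t) - (1 - A/t)*(γ*Real.exp (-γ*t))) * (t ^ ν * bterm ν k t)‖
        + ‖((1 - A/t) * Real.exp (-γ*t)) * (t ^ ν * bterm (ν-1) k t)‖ := norm_add_le _ _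
    _ ≤ (1/A + γ) * (x ^ ν * bterm ν k x) + 1 * (x ^ ν * bterm (ν-1) k x) := by
        apply add_le_add
        · rw [norm_mul, Real.norm_eq_abs, Real.norm_eq_abs, abs_of_nonneg hn1]
          apply mul_le_mul hc1 hm1 hn1 (by positivity)
        · rw [norm_mul, Real.norm_eq_abs, Real.norm_eq_abs, abs_of_nonneg hn2]
          apply mul_le_mul hc2 hm2 hn2 (by norm_num)
    _ = (1/A + γ) * (x ^ ν * bterm ν k x) + x ^ ν * bterm (ν-1) k x := by ring
lemma psi_swap (γ A ν x : ℝ) (hγ0 : 0 < γ) (hν : 1/2 < ν) (hA : 0 < A) (hAx : A ≤ x) :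
    ∑' k, ∫ t in Set.Ioc A x, psi γ A ν k t = ∫ t in Set.Ioc A x, ∑' k, psi γ A ν k t := by
  have hx0 : 0 < x := lt_of_lt_of_le hA hAx
  set C : ℕ → ℝ := fun k => (1/A + γ) * (x ^ ν * bterm ν k x) + x ^ ν * bterm (ν-1) k x with hC
  have hCnonneg : ∀ k, 0 ≤ C k := by
    intro k
    have h1 := bterm_nonneg ν (by linarith) k hx0
    have h2 := bterm_nonneg (ν-1) (by linarith) k hx0
    have : 0 ≤ 1/A + γ := by positivity
    simp only [hC]
    positivity
  have hCsum : Summable C := by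
    apply Summable.add
    · exact (((bterm_summable ν (by linarith) hx0).mul_left (x ^ ν)).mul_left (1/A + γ))
    · exact ((bterm_summable (ν-1) (by linarith) hx0).mul_left (x ^ ν))
  refine (MeasureTheory.integral_tsum (fun k => (psi_measurable γ A ν k).aestronglyMeasurable) ?_).symm
  have hone : ∀ k, ∫⁻ t, ‖psi γ A ν k t‖₊ ∂(volume.restrict (Set.Ioc A x))
      ≤ ENNReal.ofReal (C k) * ENNReal.ofReal (x - A) := by
    intro k
    calc ∫⁻ t, ‖psi γ A ν k t‖₊ ∂(volume.restrict (Set.Ioc A x))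
        ≤ ∫⁻ _, ENNReal.ofReal (C k) ∂(volume.restrict (Set.Ioc A x)) := by
          apply MeasureTheory.lintegral_mono_ae
          rw [ae_restrict_iff' measurableSet_Ioc]
          filter_upwards with t hmem
          rw [← ENNReal.ofReal_coe_nnreal, coe_nnnorm]
          exact ENNReal.ofReal_le_ofReal (psi_norm_bound γ A ν hγ0 hν hA k hmem.1.le hmem.2)
      _ = ENNReal.ofReal (C k) * ENNReal.ofReal (x - A) := by
          rw [MeasureTheory.lintegral_const, Measure.restrict_apply_univ, Real.volume_Ioc]
  have hle : ∑' k, ∫⁻ t, ‖psi γ A ν k t‖₊ ∂(volume.restrict (Set.Ioc A x))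
      ≤ ENNReal.ofReal (∑' k, C k) * ENNReal.ofReal (x - A) := by
    calc ∑' k, ∫⁻ t, ‖psi γ A ν k t‖₊ ∂(volume.restrict (Set.Ioc A x))
        ≤ ∑' k, ENNReal.ofReal (C k) * ENNReal.ofReal (x - A) := ENNReal.tsum_le_tsum hone
      _ = (∑' k, ENNReal.ofReal (C k)) * ENNReal.ofReal (x - A) := ENNReal.tsum_mul_right
      _ = ENNReal.ofReal (∑' k, C k) * ENNReal.ofReal (x - A) := by
          rw [ENNReal.ofReal_tsum_of_nonneg hCnonneg hCsum]
  exact ne_top_of_le_ne_top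
    (ENNReal.mul_ne_top ENNReal.ofReal_ne_top ENNReal.ofReal_ne_top) hle

lemma psi_tsum_eq (γ A ν : ℝ) (hν : 1/2 < ν) {t : ℝ} (ht : 0 < t) :
    ∑' k, psi γ A ν k t
      = (A/t^2 * Real.exp (-γ*t) - (1 - A/t)*(γ*Real.exp (-γ*t))) * (t ^ ν * besselI ν t)
        + ((1 - A/t) * Real.exp (-γ*t)) * (t ^ ν * besselI (ν-1) t) := by
  have hs1 : Summable (fun k => (A/t^2 * Real.exp (-γ*t) - (1 - A/t)*(γ*Real.exp (-γ*t)))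
      * (t ^ ν * bterm ν k t)) :=
    (((bterm_summable ν (by linarith) ht).mul_left (t ^ ν)).mul_left _)
  have hs2 : Summable (fun k => ((1 - A/t) * Real.exp (-γ*t)) * (t ^ ν * bterm (ν-1) k t)) :=
    (((bterm_summable (ν-1) (by linarith) ht).mul_left (t ^ ν)).mul_left _)
  unfold psi
  rw [Summable.tsum_add hs1 hs2, tsum_mul_left, tsum_mul_left, tsum_mul_left, tsum_mul_left,
    ← besselI_eq, ← besselI_eq]

lemma psi_sum_le (γ A ν : ℝ) (hγ0 : 0 < γ) (hγ1 : γ < 1) (hν : 1/2 < ν) (hA : 0 < A)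
    (h2ν : 2*ν ≤ A*(1-γ)) {t : ℝ} (htA : A ≤ t) :
    (A/t^2 * Real.exp (-γ*t) - (1 - A/t)*(γ*Real.exp (-γ*t))) * (t ^ ν * besselI ν t)
        + ((1 - A/t) * Real.exp (-γ*t)) * (t ^ ν * besselI (ν-1) t)
      ≤ (1-γ) * (Real.exp (-γ*t) * (t ^ ν * besselI ν t)) := by
  have ht0 : 0 < t := lt_of_lt_of_le hA htA
  rw [besselI_recurrence ν hν ht0]
  set M := besselI ν t with hM
  set N := besselI (ν+1) t with hN
  have hMpos : 0 ≤ M := besselI_nonneg ν (by linarith) ht0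
  have hNpos : 0 ≤ N := besselI_nonneg (ν+1) (by linarith) ht0
  have hNM : N ≤ M := besselI_succ_le_s7 ν hν ht0
  have hE : 0 < Real.exp (-γ*t) := Real.exp_pos _
  have hT : 0 < t ^ ν := Real.rpow_pos_of_pos ht0 ν
  have hpoly : A*M + (t-A)*(2*ν*M + t*N) - γ*t*(t-A)*M ≤ (1-γ)*t^2*M := by
    nlinarith [mul_nonneg (mul_nonneg (sub_nonneg.mpr htA) ht0.le) (sub_nonneg.mpr hNM),
      mul_nonneg (mul_nonneg hMpos (sub_nonneg.mpr h2ν)) ht0.le,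
      mul_nonneg (mul_nonneg hMpos (by linarith : (0:ℝ) ≤ 2*ν - 1)) hA.le]
  have heq : (A/t^2 * Real.exp (-γ*t) - (1 - A/t)*(γ*Real.exp (-γ*t))) * (t ^ ν * M)
        + ((1 - A/t) * Real.exp (-γ*t)) * (t ^ ν * (2*ν/t * M + N))
        - (1-γ) * (Real.exp (-γ*t) * (t ^ ν * M))
      = (Real.exp (-γ*t) * t ^ ν / t^2)
        * (A*M + (t-A)*(2*ν*M + t*N) - γ*t*(t-A)*M - (1-γ)*t^2*M) := by
    field_simp
    ring
  have hfac : 0 ≤ Real.exp (-γ*t) * t ^ ν / t^2 := by positivity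
  nlinarith [mul_nonneg hfac (sub_nonneg.mpr hpoly)]
lemma setIntegral_f_pos (γ ν : ℝ) (hγ0 : 0 < γ) (hν : 1/2 < ν) {c : ℝ} (hc : 0 < c) :
    0 < ∫ t in Set.Ioc (0:ℝ) c, Real.exp (-γ*t) * (t ^ ν * besselI ν t) := by
  have hint : IntegrableOn (fun t => Real.exp (-γ*t) * (t ^ ν * besselI ν t)) (Set.Ioc 0 c) := by
    apply integrableOn_weight_besselI ν ν (by linarith) (by linarith) le_rfl hc.le
      (fun t => Real.exp (-γ*t)) ((measurable_id.const_mul (-γ)).exp) 1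
    intro t hmem
    rw [abs_of_pos (Real.exp_pos _)]
    exact exp_le_one' γ hγ0 (hmem.1)
  rw [MeasureTheory.setIntegral_pos_iff_support_of_nonneg_ae _ hint]
  · have hsub : Set.Ioc 0 c ⊆ Function.support (fun t => Real.exp (-γ*t) * (t ^ ν * besselI ν t))
        ∩ Set.Ioc 0 c := by
      intro t hmem
      refine ⟨?_, hmem⟩
      have ht0 : 0 < t := hmem.1
      have := besselI_pos_s7 ν (by linarith) ht0
      have h2 : 0 < Real.exp (-γ*t) * (t ^ ν * besselI ν t) := by positivity
      exact Function.mem_support.mpr h2.ne'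
    calc 0 < ENNReal.ofReal c := by simpa using hc
      _ = volume (Set.Ioc (0:ℝ) c) := by rw [Real.volume_Ioc, sub_zero]
      _ ≤ volume _ := measure_mono hsub
  · rw [Filter.EventuallyLE, ae_restrict_iff' measurableSet_Ioc]
    filter_upwards with t hmem
    have ht0 : 0 < t := hmem.1
    have := besselI_nonneg ν (by linarith) ht0
    positivity

lemma case2 (γ ν A x : ℝ) (hγ0 : 0 < γ) (hγ1 : γ < 1) (hν : 1/2 < ν) (hA : 0 < A)
    (h2ν : 2*ν ≤ A*(1-γ)) (hAx : A ≤ x) :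
    (1 - A/x) * (Real.exp (-γ*x) * (x ^ ν * besselI ν x))
      ≤ (1-γ) * ∫ t in Set.Ioc A x, Real.exp (-γ*t) * (t ^ ν * besselI ν t) := by
  have hx0 : 0 < x := lt_of_lt_of_le hA hAx
  -- step 1 : sum of the per-term FTC identities
  have step1 : (1 - A/x) * (Real.exp (-γ*x) * (x ^ ν * besselI ν x))
      = ∑' k, ∫ t in Set.Ioc A x, psi γ A ν k t := by
    have h1 : ∀ k : ℕ, ∫ t in Set.Ioc A x, psi γ A ν k t
        = ((1 - A/x) * Real.exp (-γ*x) * x ^ ν) * bterm ν k x := by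
      intro k
      rw [ftc_term γ A ν hν hA hAx k]
      ring
    rw [tsum_congr h1, tsum_mul_left, ← besselI_eq]
    ring
  -- step 2 : swap sum and integral
  have step2 := psi_swap γ A ν x hγ0 hν hA hAx
  -- step 3 : identify the summed integrand
  have step3 : ∫ t in Set.Ioc A x, ∑' k, psi γ A ν k t
      = ∫ t in Set.Ioc A x,
          ((A/t^2 * Real.exp (-γ*t) - (1 - A/t)*(γ*Real.exp (-γ*t))) * (t ^ ν * besselI ν t)
            + ((1 - A/t) * Real.exp (-γ*t)) * (t ^ ν * besselI (ν-1) t)) := by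
    apply MeasureTheory.setIntegral_congr_fun measurableSet_Ioc
    intro t hmem
    exact psi_tsum_eq γ A ν hν (lt_of_lt_of_le hA hmem.1.le)
  -- integrability of the identified integrand
  have hmexp : Measurable fun t : ℝ => Real.exp (-γ*t) := (measurable_id.const_mul (-γ)).exp
  have hJ1 : IntegrableOn (fun t =>
      (A/t^2 * Real.exp (-γ*t) - (1 - A/t)*(γ*Real.exp (-γ*t))) * (t ^ ν * besselI ν t))
      (Set.Ioc A x) := by
    apply integrableOn_weight_besselI ν ν (by linarith) (by linarith) hA.le hAx _
      (((measurable_const.div (measurable_id.pow_const 2)).mul hmexp).sub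
        ((measurable_const.sub (measurable_const.div measurable_id)).mul (hmexp.const_mul γ)))
      (1/A + γ)
    exact fun t hmem => c1_bound γ A hγ0 hA hmem.1.le
  have hJ2 : IntegrableOn (fun t =>
      ((1 - A/t) * Real.exp (-γ*t)) * (t ^ ν * besselI (ν-1) t)) (Set.Ioc A x) := by
    apply integrableOn_weight_besselI ν (ν-1) (by linarith) (by linarith) hA.le hAx _
      ((measurable_const.sub (measurable_const.div measurable_id)).mul hmexp) 1
    exact fun t hmem => c2_bound γ A hγ0 hA hmem.1.le
  have hfint : IntegrableOn (fun t => Real.exp (-γ*t) * (t ^ ν * besselI ν t)) (Set.Ioc A x) := by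
    apply integrableOn_weight_besselI ν ν (by linarith) (by linarith) hA.le hAx _ hmexp 1
    intro t hmem
    rw [abs_of_pos (Real.exp_pos _)]
    exact exp_le_one' γ hγ0 (lt_of_lt_of_le hA hmem.1.le)
  -- step 4 : pointwise comparison
  have step4 : ∫ t in Set.Ioc A x,
      ((A/t^2 * Real.exp (-γ*t) - (1 - A/t)*(γ*Real.exp (-γ*t))) * (t ^ ν * besselI ν t)
        + ((1 - A/t) * Real.exp (-γ*t)) * (t ^ ν * besselI (ν-1) t))
      ≤ ∫ t in Set.Ioc A x, (1-γ) * (Real.exp (-γ*t) * (t ^ ν * besselI ν t)) := by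
    apply MeasureTheory.setIntegral_mono_on (hJ1.add hJ2) (hfint.const_mul (1-γ))
      measurableSet_Ioc
    intro t hmem
    exact psi_sum_le γ A ν hγ0 hγ1 hν hA h2ν hmem.1.le
  have step5 : ∫ t in Set.Ioc A x, (1-γ) * (Real.exp (-γ*t) * (t ^ ν * besselI ν t))
      = (1-γ) * ∫ t in Set.Ioc A x, Real.exp (-γ*t) * (t ^ ν * besselI ν t) :=
    MeasureTheory.integral_const_mul _ _
  rw [step1, step2, step3, ← step5]
  exact step4

theorem stmt_7 (γ ν : ℝ) (hγ0 : 0 < γ) (hγ1 : γ < 1) (hν : 1/2 < ν) (x : ℝ) (hx : 0 < x) :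
    ∫ t in (0 : ℝ)..x, Real.exp (-γ * t) * t ^ ν * besselI ν t >
      (1 / (1 - γ)) * (1 - 4 * ν * (2 * ν + 5) / ((2 * ν - 1) * (1 - γ) * x)) *
        (Real.exp (-γ * x) * x ^ ν * besselI ν x) := by
  have h1γ : 0 < 1 - γ := by linarith
  have h2ν1 : 0 < 2*ν - 1 := by linarith
  set A : ℝ := 4*ν*(2*ν+5) / ((2*ν-1)*(1-γ)) with hA_def
  have hA : 0 < A := by
    apply div_pos
    · nlinarith
    · positivity
  have hbracket : 1 - 4 * ν * (2 * ν + 5) / ((2 * ν - 1) * (1 - γ) * x) = 1 - A/x := by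
    rw [hA_def, div_div]
  have hS : ∫ t in (0:ℝ)..x, Real.exp (-γ * t) * t ^ ν * besselI ν t
      = ∫ t in Set.Ioc (0:ℝ) x, Real.exp (-γ*t) * (t ^ ν * besselI ν t) := by
    rw [intervalIntegral.integral_of_le hx.le]
    apply MeasureTheory.setIntegral_congr_fun measurableSet_Ioc
    intro t _
    ring
  have hg : 0 < Real.exp (-γ*x) * (x ^ ν * besselI ν x) := by
    have := besselI_pos_s7 ν (by linarith) hx
    positivity
  have hgoal_g : Real.exp (-γ * x) * x ^ ν * besselI ν x
      = Real.exp (-γ*x) * (x ^ ν * besselI ν x) := by ring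
  rw [hS, hbracket, hgoal_g]
  rcases le_or_gt x A with hxA | hAx
  · -- trivial case : bracket nonpositive
    have hSpos := setIntegral_f_pos γ ν hγ0 hν hx
    have hb : 1 - A/x ≤ 0 := by
      have : (1:ℝ) ≤ A/x := (one_le_div hx).mpr hxA
      linarith
    have hc : (0:ℝ) < 1/(1-γ) := by positivity
    have : (1 / (1 - γ)) * (1 - A/x) * (Real.exp (-γ*x) * (x ^ ν * besselI ν x)) ≤ 0 := by
      apply mul_nonpos_of_nonpos_of_nonneg _ hg.le
      exact mul_nonpos_of_nonneg_of_nonpos hc.le hb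
    linarith
  · -- main case
    have h2νA : 2*ν ≤ A*(1-γ) := by
      rw [hA_def, div_mul_eq_mul_div, le_div_iff₀ (by positivity : (0:ℝ) < (2*ν-1)*(1-γ))]
      nlinarith [mul_nonneg (mul_nonneg (by linarith : (0:ℝ) ≤ 2*ν) h1γ.le)
        (by linarith : (0:ℝ) ≤ 2*ν+11)]
    have hsplit : ∫ t in Set.Ioc (0:ℝ) x, Real.exp (-γ*t) * (t ^ ν * besselI ν t)
        = (∫ t in Set.Ioc (0:ℝ) A, Real.exp (-γ*t) * (t ^ ν * besselI ν t))
          + ∫ t in Set.Ioc A x, Real.exp (-γ*t) * (t ^ ν * besselI ν t) := by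
      rw [← Set.Ioc_union_Ioc_eq_Ioc hA.le hAx.le]
      apply MeasureTheory.setIntegral_union _ measurableSet_Ioc
      · apply integrableOn_weight_besselI ν ν (by linarith) (by linarith) le_rfl hA.le _
          ((measurable_id.const_mul (-γ)).exp) 1
        intro t hmem
        rw [abs_of_pos (Real.exp_pos _)]
        exact exp_le_one' γ hγ0 hmem.1
      · apply integrableOn_weight_besselI ν ν (by linarith) (by linarith) hA.le hAx.le _
          ((measurable_id.const_mul (-γ)).exp) 1
        intro t hmem
        rw [abs_of_pos (Real.exp_pos _)]
        exact exp_le_one' γ hγ0 (lt_of_lt_of_le hA hmem.1.le)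
      · exact Set.Ioc_disjoint_Ioc_of_le le_rfl
    have hpos0A := setIntegral_f_pos γ ν hγ0 hν hA
    have hmain := case2 γ ν A x hγ0 hγ1 hν hA h2νA hAx.le
    -- divide by (1-γ)
    have hfinal : (1 / (1 - γ)) * ((1 - A/x) * (Real.exp (-γ*x) * (x ^ ν * besselI ν x)))
        ≤ ∫ t in Set.Ioc A x, Real.exp (-γ*t) * (t ^ ν * besselI ν t) := by
      rw [div_mul_eq_mul_div, one_mul, div_le_iff₀ h1γ]
      linarith [hmain]
    rw [hsplit]
    calc (1 / (1-γ)) * (1 - A/x) * (Real.exp (-γ*x) * (x ^ ν * besselI ν x))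
        = (1 / (1-γ)) * ((1 - A/x) * (Real.exp (-γ*x) * (x ^ ν * besselI ν x))) := by ring
      _ ≤ ∫ t in Set.Ioc A x, Real.exp (-γ*t) * (t ^ ν * besselI ν t) := hfinal
      _ < _ := by linarith
end

section
/- Let 0 < γ < 1 and −1/2 < ν ≤ 0. Then for all x > 0, ∫_0^x e^{−γt} t^ν I_{ν+1}(t) dt > (1/(1−γ)) · { e^{−γx} x^ν ( I_ν(x) − x^ν/(Γ(ν+1)·2^ν) ) − γ(2ν+1, γx)/(Γ(ν+1)·2^ν·γ^{2ν}) }, where γ(a,x) denotes the lower incomplete gamma function. -/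
open Real MeasureTheory

noncomputable def gc (μ : ℝ) (k : ℕ) : ℝ :=
  1 / ((2:ℝ) ^ (μ + 2*(k:ℝ)) * Real.Gamma (μ + (k:ℝ) + 1) * (Nat.factorial k : ℝ))

noncomputable def gf (μ : ℝ) (t : ℝ) : ℝ := ∑' k : ℕ, gc μ k * t ^ (2*k)

lemma gc_pos {μ : ℝ} (hμ : -1 < μ) (k : ℕ) : 0 < gc μ k := by
  have h1 : (0:ℝ) < Real.Gamma (μ + (k:ℝ) + 1) := by
    apply Real.Gamma_pos_of_pos
    have : (0:ℝ) ≤ (k:ℝ) := Nat.cast_nonneg k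
    linarith
  have h2 : (0:ℝ) < (2:ℝ) ^ (μ + 2*(k:ℝ)) := Real.rpow_pos_of_pos (by norm_num) _
  have h3 : (0:ℝ) < (Nat.factorial k : ℝ) := by positivity
  unfold gc; positivity

lemma Gamma_lb {μ : ℝ} (hμ : -(1/2:ℝ) < μ) (k : ℕ) :
    Real.Gamma (μ + 1) * (Nat.factorial k : ℝ) / 2 ^ k ≤ Real.Gamma (μ + (k:ℝ) + 1) := by
  induction k with
  | zero => simp
  | succ n ih =>
    have hpos : (0:ℝ) < μ + (n:ℝ) + 1 := by
      have : (0:ℝ) ≤ (n:ℝ) := Nat.cast_nonneg n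
      linarith
    have hrec : Real.Gamma (μ + (n+1:ℕ) + 1) = (μ + (n:ℝ) + 1) * Real.Gamma (μ + (n:ℝ) + 1) := by
      push_cast
      rw [show μ + ((n:ℝ)+1) + 1 = (μ + (n:ℝ) + 1) + 1 by ring, Real.Gamma_add_one (ne_of_gt hpos)]
    rw [hrec]
    have hG : (0:ℝ) < Real.Gamma (μ + (n:ℝ) + 1) := Real.Gamma_pos_of_pos hpos
    have h2 : ((n:ℝ) + 1) / 2 ≤ μ + (n:ℝ) + 1 := by linarith
    calc Real.Gamma (μ + 1) * (Nat.factorial (n+1) : ℝ) / 2 ^ (n+1)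
        = (((n:ℝ)+1)/2) * (Real.Gamma (μ + 1) * (Nat.factorial n : ℝ) / 2 ^ n) := by
          push_cast [Nat.factorial_succ]; ring
      _ ≤ (μ + (n:ℝ) + 1) * (Real.Gamma (μ + 1) * (Nat.factorial n : ℝ) / 2 ^ n) := by
          apply mul_le_mul_of_nonneg_right h2
          have hG1 : (0:ℝ) < Real.Gamma (μ + 1) := Real.Gamma_pos_of_pos (by linarith)
          positivity
      _ ≤ (μ + (n:ℝ) + 1) * Real.Gamma (μ + (n:ℝ) + 1) :=
          mul_le_mul_of_nonneg_left ih (le_of_lt hpos)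

lemma gc_le {μ : ℝ} (hμ : -(1/2:ℝ) < μ) (k : ℕ) :
    gc μ k ≤ ((2:ℝ) ^ (-μ) / Real.Gamma (μ + 1)) * ((1/2) ^ k / ((Nat.factorial k : ℝ) * (Nat.factorial k : ℝ))) := by
  have hG1 : (0:ℝ) < Real.Gamma (μ + 1) := Real.Gamma_pos_of_pos (by linarith)
  have hfac : (0:ℝ) < (Nat.factorial k : ℝ) := by positivity
  have hGk : (0:ℝ) < Real.Gamma (μ + (k:ℝ) + 1) :=
    Real.Gamma_pos_of_pos (by have : (0:ℝ) ≤ (k:ℝ) := Nat.cast_nonneg k; linarith)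
  have hlb := Gamma_lb hμ k
  have hlbpos : (0:ℝ) < Real.Gamma (μ + 1) * (Nat.factorial k : ℝ) / 2 ^ k := by positivity
  have h2r : (2:ℝ) ^ (μ + 2*(k:ℝ)) = (2:ℝ) ^ μ * 4 ^ k := by
    rw [Real.rpow_add (by norm_num)]
    congr 1
    rw [show (2:ℝ)*(k:ℝ) = ((2*k : ℕ) : ℝ) by push_cast; ring, Real.rpow_natCast, pow_mul]
    norm_num
  unfold gc
  rw [h2r]
  rw [div_le_iff₀ (by positivity)]
  have key : (2:ℝ) ^ (-μ) = ((2:ℝ)^μ)⁻¹ := by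
    rw [Real.rpow_neg (by norm_num)]
  rw [key]
  have h2pos : (0:ℝ) < (2:ℝ)^μ := Real.rpow_pos_of_pos (by norm_num) μ
  -- goal: 1 ≤ (2^μ)⁻¹ / Γ(μ+1) * ((1/2)^k / (k! * k!)) * (2^μ * 4^k * Γ(μ+k+1) * k!)
  have hGamma_ge : Real.Gamma (μ + 1) * (Nat.factorial k : ℝ) / 2 ^ k ≤ Real.Gamma (μ + (k:ℝ) + 1) := Gamma_lb hμ k
  calc (1:ℝ) = ((2:ℝ)^μ)⁻¹ / Real.Gamma (μ+1) * ((1/2)^k / ((Nat.factorial k:ℝ) * (Nat.factorial k:ℝ)))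
        * ((2:ℝ)^μ * 4^k * (Real.Gamma (μ + 1) * (Nat.factorial k : ℝ) / 2 ^ k) * (Nat.factorial k:ℝ)) := by
        have h4 : (4:ℝ)^k = 2^k * 2^k := by rw [← mul_pow]; norm_num
        field_simp
        rw [h4]; ring_nf
        rw [one_div, inv_pow, pow_mul]; field_simp
    _ ≤ _ := by
        apply mul_le_mul_of_nonneg_left
        · apply mul_le_mul_of_nonneg_right
          apply mul_le_mul_of_nonneg_left hGamma_ge
          · positivity
          · positivity
        · positivity

lemma fact_one_le (k : ℕ) : (1:ℝ) ≤ (Nat.factorial k : ℝ) := by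
  exact_mod_cast Nat.one_le_iff_ne_zero.mpr (Nat.factorial_ne_zero k)

lemma summable_gc_mul {μ : ℝ} (hμ : -(1/2:ℝ) < μ) {r : ℝ} (hr : 0 ≤ r) :
    Summable (fun k : ℕ => gc μ k * (2*(k:ℝ)+2) * r^k) := by
  set C := (2:ℝ) ^ (-μ) / Real.Gamma (μ + 1) with hC
  have hCpos : 0 < C := by
    have := Real.Gamma_pos_of_pos (show (0:ℝ) < μ + 1 by linarith)
    have := Real.rpow_pos_of_pos (show (0:ℝ) < 2 by norm_num) (-μ)
    positivity
  apply Summable.of_nonneg_of_le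
    (fun k => by
      have := gc_pos (show (-1:ℝ) < μ by linarith) k
      positivity)
    (fun k => ?_)
    (((Real.summable_pow_div_factorial r).mul_left (4*C)))
  have h1 := gc_le hμ k
  have hfac := fact_one_le k
  have hfp : (0:ℝ) < (Nat.factorial k : ℝ) := by linarith
  have h2 : (2*(k:ℝ)+2) * (1/2:ℝ)^k ≤ 4 := by
    have hk : (k:ℝ)+1 ≤ 2^k * 2 := by
      have h := Nat.lt_two_pow_self (n := k+1)
      calc (k:ℝ)+1 ≤ ((2^(k+1) : ℕ) : ℝ) := by exact_mod_cast le_of_lt h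
        _ = 2^k*2 := by push_cast [pow_succ]; ring
    have hp : (0:ℝ) < (2:ℝ)^k := by positivity
    rw [div_pow, one_pow, mul_one_div, div_le_iff₀ hp]
    nlinarith [hk]
  have hrk : (0:ℝ) ≤ r^k := by positivity
  have h2k2 : (0:ℝ) ≤ 2*(k:ℝ)+2 := by positivity
  have key : gc μ k * (2*(k:ℝ)+2) ≤ 4*C/(Nat.factorial k : ℝ) := by
    calc gc μ k * (2*(k:ℝ)+2)
        ≤ (C * ((1/2) ^ k / ((Nat.factorial k : ℝ) * (Nat.factorial k : ℝ)))) * (2*(k:ℝ)+2) :=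
          mul_le_mul_of_nonneg_right h1 h2k2
      _ = C * ((2*(k:ℝ)+2)*(1/2:ℝ)^k) / ((Nat.factorial k : ℝ) * (Nat.factorial k : ℝ)) := by
          ring
      _ ≤ C * 4 / ((Nat.factorial k : ℝ) * 1) := by
          apply div_le_div₀ (by positivity) (mul_le_mul_of_nonneg_left h2 hCpos.le)
            (by linarith) (by nlinarith)
      _ = 4*C/(Nat.factorial k : ℝ) := by rw [mul_one]; ring
  calc gc μ k * (2*(k:ℝ)+2) * r^k ≤ (4*C/(Nat.factorial k : ℝ)) * r^k :=
        mul_le_mul_of_nonneg_right key hrk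
    _ = 4*C * (r^k / (Nat.factorial k : ℝ)) := by ring

lemma summable_gc_shift {μ : ℝ} (hμ : -(1/2:ℝ) < μ) {r : ℝ} (hr : 0 ≤ r) :
    Summable (fun k : ℕ => gc μ (k+1) * r^k) := by
  set C := (2:ℝ) ^ (-μ) / Real.Gamma (μ + 1) with hC
  have hCpos : 0 < C := by
    have := Real.Gamma_pos_of_pos (show (0:ℝ) < μ + 1 by linarith)
    have := Real.rpow_pos_of_pos (show (0:ℝ) < 2 by norm_num) (-μ)
    positivity
  apply Summable.of_nonneg_of_le
    (fun k => by
      have := gc_pos (show (-1:ℝ) < μ by linarith) (k+1)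
      positivity)
    (fun k => ?_)
    ((Real.summable_pow_div_factorial r).mul_left C)
  have h1 := gc_le hμ (k+1)
  have hfac := fact_one_le k
  have hfacs : (Nat.factorial k : ℝ) ≤ (Nat.factorial (k+1) : ℝ) := by
    exact_mod_cast Nat.factorial_le (Nat.le_succ k)
  have hfp : (0:ℝ) < (Nat.factorial k : ℝ) := by linarith
  have hfq : (0:ℝ) < (Nat.factorial (k+1) : ℝ) := by linarith
  have key : gc μ (k+1) ≤ C / (Nat.factorial k : ℝ) := by
    calc gc μ (k+1) ≤ C * ((1/2) ^ (k+1) / ((Nat.factorial (k+1) : ℝ) * (Nat.factorial (k+1) : ℝ))) := h1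
      _ ≤ C * (1 / ((Nat.factorial k : ℝ) * 1)) := by
          apply mul_le_mul_of_nonneg_left _ hCpos.le
          apply div_le_div₀ (by norm_num)
            (by apply pow_le_one₀ <;> norm_num) (by linarith)
          nlinarith
      _ = C / (Nat.factorial k : ℝ) := by rw [mul_one, mul_one_div]
  calc gc μ (k+1) * r^k ≤ (C / (Nat.factorial k : ℝ)) * r^k :=
        mul_le_mul_of_nonneg_right key (by positivity)
    _ = C * (r^k / (Nat.factorial k : ℝ)) := by ring

lemma summable_gf {μ : ℝ} (hμ : -(1/2:ℝ) < μ) (t : ℝ) :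
    Summable (fun k : ℕ => gc μ k * t ^ (2*k)) := by
  apply Summable.of_nonneg_of_le
    (fun k => by
      have h1 := gc_pos (show (-1:ℝ) < μ by linarith) k
      have h2 : (0:ℝ) ≤ t^(2*k) := by rw [pow_mul]; positivity
      positivity)
    (fun k => ?_) (summable_gc_mul hμ (show (0:ℝ) ≤ t^2 by positivity))
  rw [pow_mul]
  have h1 := gc_pos (show (-1:ℝ) < μ by linarith) k
  have h2 : (0:ℝ) ≤ (t^2)^k := by positivity
  nlinarith [mul_le_mul_of_nonneg_right (mul_le_mul_of_nonneg_left
    (show (1:ℝ) ≤ 2*(k:ℝ)+2 by have : (0:ℝ) ≤ (k:ℝ) := Nat.cast_nonneg k; linarith) h1.le) h2]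

lemma summable_gf_shift {μ : ℝ} (hμ : -(1/2:ℝ) < μ) (t : ℝ) :
    Summable (fun k : ℕ => gc μ (k+1) * t ^ (2*k)) := by
  have := summable_gc_shift hμ (show (0:ℝ) ≤ t^2 by positivity)
  apply this.congr
  intro k; rw [pow_mul]

lemma gf_pos {μ : ℝ} (hμ : -(1/2:ℝ) < μ) (t : ℝ) : 0 < gf μ t := by
  apply Summable.tsum_pos (summable_gf hμ t)
    (fun k => by
      have h1 := gc_pos (show (-1:ℝ) < μ by linarith) k
      have h2 : (0:ℝ) ≤ t^(2*k) := by rw [pow_mul]; positivity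
      positivity) 0
  simpa using (gc_pos (show (-1:ℝ) < μ by linarith) 0)

lemma gf_zero (μ : ℝ) : gf μ 0 = gc μ 0 := by
  unfold gf
  rw [tsum_eq_single 0]
  · simp
  · intro k hk
    have : 2*k ≠ 0 := by omega
    simp [zero_pow this]

lemma gc_succ {μ : ℝ} (hμ : -(1/2:ℝ) < μ) (k : ℕ) : gc μ (k+1) * (2*((k:ℝ)+1)) = gc (μ+1) k := by
  unfold gc
  have hk0 : (0:ℝ) ≤ (k:ℝ) := Nat.cast_nonneg k
  have hG : Real.Gamma (μ+1+(k:ℝ)+1) ≠ 0 := ne_of_gt (Real.Gamma_pos_of_pos (by linarith))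
  have hk1 : ((k:ℝ)+1) ≠ 0 := by linarith
  push_cast [Nat.factorial_succ]
  rw [show μ + 2*((k:ℝ)+1) = (μ+1+2*(k:ℝ))+1 by ring,
    Real.rpow_add (by norm_num : (0:ℝ) < 2), Real.rpow_one,
    show μ + ((k:ℝ)+1) + 1 = μ+1+(k:ℝ)+1 by ring]
  have h2 : (0:ℝ) < (2:ℝ) ^ (μ+1+2*(k:ℝ)) := Real.rpow_pos_of_pos (by norm_num) _
  have hf : (0:ℝ) < (Nat.factorial k : ℝ) := by positivity
  field_simp

lemma gc_rec0 (μ : ℝ) (hμ : -(1/2:ℝ) < μ) : gc μ 0 - (2*μ+2) * gc (μ+1) 0 = 0 := by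
  unfold gc
  have h1 : Real.Gamma (μ+1+(0:ℕ)+1) = (μ+1) * Real.Gamma (μ+(0:ℕ)+1) := by
    push_cast
    rw [show μ+1+0+1 = (μ+0+1)+1 by ring, Real.Gamma_add_one (by intro h; simp at h; linarith)]
    ring_nf
  push_cast at h1 ⊢
  rw [show μ + 2*(0:ℝ) = μ by ring, show μ+1+2*(0:ℝ) = μ+1 by ring] at *
  rw [h1, show (μ:ℝ)+1 = μ+1 by ring]
  rw [show (2:ℝ)^(μ+1) = 2^μ * 2 by rw [Real.rpow_add (by norm_num), Real.rpow_one]]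
  have h2 : (0:ℝ) < (2:ℝ)^μ := Real.rpow_pos_of_pos (by norm_num) _
  have h3 : (0:ℝ) < Real.Gamma (μ+1) := Real.Gamma_pos_of_pos (by linarith)
  have h4 : μ + 1 ≠ 0 := by linarith
  rw [show μ + (0:ℝ) + 1 = μ + 1 by ring]
  field_simp
  ring

lemma gc_rec (μ : ℝ) (hμ : -(1/2:ℝ) < μ) (k : ℕ) :
    gc μ (k+1) - (2*μ+2) * gc (μ+1) (k+1) = gc (μ+2) k := by
  unfold gc
  have hk0 : (0:ℝ) ≤ (k:ℝ) := Nat.cast_nonneg k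
  have hApos : (0:ℝ) < Real.Gamma (μ + (k:ℝ) + 2) := Real.Gamma_pos_of_pos (by linarith)
  push_cast [Nat.factorial_succ]
  rw [show μ + ((k:ℝ)+1) + 1 = μ + (k:ℝ) + 2 by ring,
      show μ+1 + ((k:ℝ)+1) + 1 = (μ + (k:ℝ) + 2) + 1 by ring,
      show μ+2 + (k:ℝ) + 1 = (μ + (k:ℝ) + 2) + 1 by ring,
      Real.Gamma_add_one (by linarith : μ + (k:ℝ) + 2 ≠ 0)]
  rw [show μ + 2*((k:ℝ)+1) = (μ + 2*(k:ℝ))+2 by ring,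
      show μ+1+2*((k:ℝ)+1) = (μ + 2*(k:ℝ))+3 by ring,
      show μ+2+2*(k:ℝ) = (μ + 2*(k:ℝ))+2 by ring]
  rw [show (2:ℝ)^((μ + 2*(k:ℝ))+2) = 2^(μ+2*(k:ℝ)) * 4 by
        rw [Real.rpow_add (by norm_num : (0:ℝ)<2), show ((2:ℝ)
          ^ (2:ℝ)) = 4 by rw [show (2:ℝ) = ((2:ℕ):ℝ) by norm_num, Real.rpow_natCast]; norm_num],
      show (2:ℝ)^((μ + 2*(k:ℝ))+3) = 2^(μ+2*(k:ℝ)) * 8 by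
        rw [Real.rpow_add (by norm_num : (0:ℝ)<2), show ((2:ℝ)
          ^ (3:ℝ)) = 8 by rw [show (3:ℝ) = ((3:ℕ):ℝ) by norm_num, Real.rpow_natCast]; norm_num]]
  have h2 : (0:ℝ) < (2:ℝ)^(μ+2*(k:ℝ)) := Real.rpow_pos_of_pos (by norm_num) _
  have hf : (0:ℝ) < (Nat.factorial k : ℝ) := by positivity
  have hk1 : (0:ℝ) < (k:ℝ) + 1 := by linarith
  have hA2 : μ + (k:ℝ) + 2 ≠ 0 := by linarith
  field_simp
  ring

lemma hasDerivAt_gf {μ : ℝ} (hμ : -(1/2:ℝ) < μ) (t : ℝ) :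
    HasDerivAt (gf μ) (t * gf (μ+1) t) t := by
  set R : ℝ := |t| + 1 with hR
  have habs : 0 ≤ |t| := abs_nonneg t
  have hR1 : 1 ≤ R := by rw [hR]; linarith
  have hRt : t ∈ Set.Ioo (-R) R := by
    constructor
    · have := neg_abs_le t; rw [hR]; linarith
    · have := le_abs_self t; rw [hR]; linarith
  have hu : Summable (fun k : ℕ => gc μ k * (2*(k:ℝ)+2) * (R^2)^k) :=
    summable_gc_mul hμ (by positivity)
  have hbound : ∀ (k : ℕ) (y : ℝ), y ∈ Set.Ioo (-R) R →
      ‖gc μ k * ((2*k:ℕ) * y ^ (2*k-1))‖ ≤ gc μ k * (2*(k:ℝ)+2) * (R^2)^k := by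
    intro k y hy
    have hgc := gc_pos (show (-1:ℝ) < μ by linarith) k
    have hya : |y| ≤ R := by
      rw [abs_le]; exact ⟨le_of_lt hy.1, le_of_lt hy.2⟩
    have h1 : |y| ^ (2*k-1) ≤ R ^ (2*k-1) := pow_le_pow_left₀ (abs_nonneg y) hya _
    have h2 : R ^ (2*k-1) ≤ R ^ (2*k) := pow_le_pow_right₀ hR1 (Nat.sub_le _ _)
    have h3 : ((2*k:ℕ):ℝ) ≤ 2*(k:ℝ)+2 := by push_cast; linarith
    rw [norm_mul, norm_mul, Real.norm_eq_abs, Real.norm_eq_abs, Real.norm_eq_abs,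
      abs_of_pos hgc, abs_pow, Nat.abs_cast,
      show ((R:ℝ)^2)^k = R^(2*k) from (pow_mul R 2 k).symm]
    calc gc μ k * (((2*k:ℕ):ℝ) * |y| ^ (2*k-1))
        ≤ gc μ k * ((2*(k:ℝ)+2) * R ^ (2*k)) := by
          refine mul_le_mul_of_nonneg_left ?_ hgc.le
          exact mul_le_mul h3 (h1.trans h2) (by positivity) (by linarith)
      _ = gc μ k * (2*(k:ℝ)+2) * R ^ (2*k) := by ring
  have main : HasDerivAt (fun z => ∑' k : ℕ, gc μ k * z ^ (2*k))
      (∑' k : ℕ, gc μ k * ((2*k:ℕ) * t ^ (2*k-1))) t := by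
    apply hasDerivAt_tsum_of_isPreconnected hu isOpen_Ioo (convex_Ioo _ _).isPreconnected
      (fun k y _ => ((hasDerivAt_pow (2*k) y).const_mul (gc μ k)))
      hbound hRt (summable_gf hμ t) hRt
  have hsum' : Summable (fun k : ℕ => gc μ k * ((2*k:ℕ) * t ^ (2*k-1))) :=
    Summable.of_norm_bounded hu (fun k => hbound k t hRt)
  have heq : (∑' k : ℕ, gc μ k * ((2*k:ℕ) * t ^ (2*k-1))) = t * gf (μ+1) t := by
    rw [Summable.tsum_eq_zero_add hsum']
    simp only [Nat.mul_zero, Nat.cast_zero, zero_mul, mul_zero, zero_add]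
    have hterm : ∀ k : ℕ, gc μ (k+1) * ((2*(k+1):ℕ) * t ^ (2*(k+1)-1))
        = t * (gc (μ+1) k * t ^ (2*k)) := by
      intro k
      have h1 : (2*(k+1):ℕ) - 1 = 2*k+1 := by omega
      rw [h1]
      have h2 : ((2*(k+1):ℕ):ℝ) = 2*((k:ℝ)+1) := by push_cast; ring
      rw [h2, pow_succ]
      have := gc_succ hμ k
      linear_combination (t^(2*k)*t) * this
    rw [tsum_congr hterm, tsum_mul_left]
    rfl
  rw [heq] at main
  exact main

lemma gf_sub {μ : ℝ} (hμ : -(1/2:ℝ) < μ) (t : ℝ) :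
    gf μ t = gc μ 0 + t^2 * (∑' k : ℕ, gc μ (k+1) * t^(2*k)) := by
  unfold gf
  rw [Summable.tsum_eq_zero_add (summable_gf hμ t)]
  simp only [Nat.mul_zero, pow_zero, mul_one]
  congr 1
  rw [← tsum_mul_left]
  exact tsum_congr fun k => by rw [show 2*(k+1) = 2*k+2 by ring, pow_add]; ring

lemma gf_rec {μ : ℝ} (hμ : -(1/2:ℝ) < μ) (t : ℝ) :
    t^2 * gf (μ+2) t = gf μ t - (2*μ+2) * gf (μ+1) t := by
  have hμ1 : -(1/2:ℝ) < μ+1 := by linarith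
  have hs1 := summable_gf hμ t
  have hs2 := (summable_gf hμ1 t).mul_left (2*μ+2)
  have hdiff : gf μ t - (2*μ+2) * gf (μ+1) t
      = ∑' k : ℕ, (gc μ k * t^(2*k) - (2*μ+2) * (gc (μ+1) k * t^(2*k))) := by
    unfold gf
    rw [← tsum_mul_left, ← Summable.tsum_sub hs1 hs2]
  rw [hdiff]
  have hsum3 : Summable (fun k : ℕ => gc μ k * t^(2*k) - (2*μ+2) * (gc (μ+1) k * t^(2*k))) :=
    hs1.sub hs2
  rw [Summable.tsum_eq_zero_add hsum3]
  have h0 : gc μ 0 * t^(2*0) - (2*μ+2) * (gc (μ+1) 0 * t^(2*0)) = 0 := by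
    have := gc_rec0 μ hμ
    simp only [Nat.mul_zero, pow_zero, mul_one]
    linarith
  rw [h0, zero_add]
  have hterm : ∀ k : ℕ, gc μ (k+1) * t^(2*(k+1)) - (2*μ+2) * (gc (μ+1) (k+1) * t^(2*(k+1)))
      = t^2 * (gc (μ+2) k * t^(2*k)) := by
    intro k
    have := gc_rec μ hμ k
    rw [show 2*(k+1) = 2*k+2 by ring, pow_add]
    linear_combination (t^(2*k)*t^2) * this
  rw [tsum_congr hterm, tsum_mul_left]
  rfl

lemma gf_w_pos {ν : ℝ} (hν : -(1/2:ℝ) < ν) {t : ℝ} (ht : 0 < t) :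
    t * gf (ν+1) t < gf ν t := by
  have hν1 : -(1/2:ℝ) < ν+1 := by linarith
  set p : ℝ → ℝ := fun s => Real.exp s * (gf ν s - s * gf (ν+1) s) with hp
  have hderiv : ∀ s : ℝ, HasDerivAt p ((2*ν+1) * (Real.exp s * gf (ν+1) s)) s := by
    intro s
    have h1 : HasDerivAt (fun s => gf ν s) (s * gf (ν+1) s) s := hasDerivAt_gf hν s
    have h2' : HasDerivAt (gf (ν+1)) (s * gf (ν+1+1) s) s := hasDerivAt_gf hν1 s
    have h2 : HasDerivAt (fun s => s * gf (ν+1) s)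
        (1 * gf (ν+1) s + s * (s * gf (ν+2) s)) s := by
      have := (hasDerivAt_id s).mul h2'
      rw [show ν+1+1 = ν+2 by ring] at this
      simp only [one_mul] at this ⊢; exact this
    have h4 := (Real.hasDerivAt_exp s).mul (h1.sub h2)
    have hrec := gf_rec hν s
    refine h4.congr_deriv (Eq.symm ?_)
    simp only [Pi.sub_apply, Pi.mul_apply]
    linear_combination (Real.exp s) * hrec
  have hmono : StrictMono p := by
    apply strictMono_of_deriv_pos
    intro s
    rw [(hderiv s).deriv]
    have hg := gf_pos hν1 s
    have he := Real.exp_pos s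
    have h2ν : (0:ℝ) < 2*ν+1 := by linarith
    exact mul_pos h2ν (mul_pos he hg)
  have h0 : p 0 = gc ν 0 := by
    rw [hp]
    simp [gf_zero]
  have hlt : p 0 < p t := hmono ht
  have hgc0 := gc_pos (show (-1:ℝ) < ν by linarith) 0
  rw [h0] at hlt
  have hexp := Real.exp_pos t
  have hpt : p t = Real.exp t * (gf ν t - t * gf (ν+1) t) := rfl
  rw [hpt] at hlt
  have : 0 < gf ν t - t * gf (ν+1) t := by
    by_contra hcon
    push_neg at hcon
    nlinarith [mul_nonpos_of_nonneg_of_nonpos hexp.le hcon]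
  linarith

lemma gc_zero_eq (ν : ℝ) : gc ν 0 = 1 / (Real.Gamma (ν+1) * 2 ^ ν) := by
  unfold gc
  norm_num
  ring

lemma besselI_eq_s17 {μ : ℝ} (hμ : -(1/2:ℝ) < μ) {t : ℝ} (ht : 0 < t) :
    besselI μ t = t ^ μ * gf μ t := by
  unfold besselI gf
  rw [← tsum_mul_left]
  apply tsum_congr
  intro k
  have hk0 : (0:ℝ) ≤ (k:ℝ) := Nat.cast_nonneg k
  have hG : (0:ℝ) < Real.Gamma (μ + (k:ℝ) + 1) := Real.Gamma_pos_of_pos (by linarith)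
  have hf : (0:ℝ) < (Nat.factorial k : ℝ) := by positivity
  have h2 : (0:ℝ) < (2:ℝ) ^ (μ + 2*(k:ℝ)) := Real.rpow_pos_of_pos (by norm_num) _
  have hdiv : (t/2) ^ (μ + 2*(k:ℝ)) = t ^ (μ + 2*(k:ℝ)) / 2 ^ (μ + 2*(k:ℝ)) :=
    Real.div_rpow ht.le (by norm_num) _
  have hadd : t ^ (μ + 2*(k:ℝ)) = t ^ μ * t ^ (2*k) := by
    rw [Real.rpow_add ht, show (2*(k:ℝ)) = ((2*k:ℕ):ℝ) by push_cast; ring, Real.rpow_natCast]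
  rw [hdiv, hadd]
  unfold gc
  field_simp

lemma besselI_zero {μ : ℝ} (hμ : 0 < μ) : besselI μ 0 = 0 := by
  unfold besselI
  convert tsum_zero with k
  have hk0 : (0:ℝ) ≤ (k:ℝ) := Nat.cast_nonneg k
  rw [show ((0:ℝ)/2) = 0 by norm_num, Real.zero_rpow (by positivity), zero_div]

theorem stmt_17 (γ ν : ℝ) (hγ0 : 0 < γ) (hγ1 : γ < 1) (hν1 : -(1/2) < ν) (hν2 : ν ≤ 0)
    (x : ℝ) (hx : 0 < x) :
    ∫ t in (0 : ℝ)..x, Real.exp (-γ * t) * t ^ ν * besselI (ν + 1) t >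
      (1 / (1 - γ)) *
        (Real.exp (-γ * x) * x ^ ν * (besselI ν x - x ^ ν / (Real.Gamma (ν + 1) * 2 ^ ν)) -
          lowerIncGamma (2 * ν + 1) (γ * x) / (Real.Gamma (ν + 1) * 2 ^ ν * γ ^ (2 * ν))) := by
  have hνa : -(1/2:ℝ) < ν + 1 := by linarith
  have hΓ : (0:ℝ) < Real.Gamma (ν+1) := Real.Gamma_pos_of_pos (by linarith)
  have h2νp : (0:ℝ) < (2:ℝ)^(ν:ℝ) := Real.rpow_pos_of_pos (by norm_num) _
  have hγν : (0:ℝ) < γ ^ (2*ν) := Real.rpow_pos_of_pos hγ0 _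
  have h1γ : (0:ℝ) < 1 - γ := by linarith
  set cB : ℝ := 1 / (Real.Gamma (ν+1) * 2^(ν:ℝ) * γ^(2*ν)) with hcB
  set ft : ℝ → ℝ := fun t => Real.exp (-γ*t) * (t ^ (2*ν+1) * gf (ν+1) t) with hft
  have hcont_pow : Continuous (fun t : ℝ => t ^ (2*ν+1)) := by
    rw [continuous_iff_continuousAt]
    intro t
    exact Real.continuousAt_rpow_const t _ (Or.inr (by linarith))
  have hgf_cont : Continuous (gf (ν+1)) := by
    rw [continuous_iff_continuousAt]
    intro t
    exact (hasDerivAt_gf hνa t).continuousAt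
  have hexp_cont : Continuous (fun t : ℝ => Real.exp (-γ*t)) :=
    Real.continuous_exp.comp (continuous_const.mul continuous_id)
  have hft_cont : Continuous ft := hexp_cont.mul (hcont_pow.mul hgf_cont)
  set J : ℝ → ℝ := fun y => ∫ t in (0:ℝ)..y, ft t with hJ
  have hJd : ∀ y : ℝ, HasDerivAt J (ft y) y := fun y =>
    intervalIntegral.integral_hasDerivAt_right (hft_cont.intervalIntegrable 0 y)
      (hft_cont.stronglyMeasurableAtFilter _ _) hft_cont.continuousAt
  set Aa : ℝ → ℝ := fun y => Real.exp (-γ*y) * (y ^ (2*ν) * (gf ν y - gc ν 0)) with hAa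
  set L : ℝ → ℝ := fun y => (∫ s in (0:ℝ)..(γ*y), s ^ (2*ν) * Real.exp (-s)) * cB with hL
  set Φ : ℝ → ℝ := fun y => (1-γ) * J y - Aa y + L y with hΦdef
  have hexpd : ∀ y : ℝ, HasDerivAt (fun y => Real.exp (-γ*y)) (-γ * Real.exp (-γ*y)) y := by
    intro y
    have h := ((hasDerivAt_id y).const_mul (-γ)).exp
    simpa [mul_comm] using h
  have hAd : ∀ y : ℝ, 0 < y → HasDerivAt Aa
      (Real.exp (-γ*y) * ((-γ) * (y^(2*ν) * (gf ν y - gc ν 0))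
        + (2*ν * y^(2*ν-1) * (gf ν y - gc ν 0) + y^(2*ν) * (y * gf (ν+1) y)))) y := by
    intro y hy
    have h1 : HasDerivAt (fun y : ℝ => y ^ (2*ν)) (2*ν * y^(2*ν-1)) y :=
      Real.hasDerivAt_rpow_const (Or.inl (ne_of_gt hy))
    have h2 : HasDerivAt (fun y => gf ν y - gc ν 0) (y * gf (ν+1) y) y :=
      (hasDerivAt_gf hν1 y).sub_const _
    have h4 := (hexpd y).mul (h1.mul h2)
    refine h4.congr_deriv (Eq.symm ?_)
    simp only [Pi.sub_apply, Pi.mul_apply]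
    ring
  have hInt : ∀ s : ℝ, IntervalIntegrable (fun t : ℝ => t ^ (2*ν) * Real.exp (-t)) volume 0 s := by
    intro s
    apply (intervalIntegral.intervalIntegrable_rpow' (by linarith)).mul_continuousOn
    exact (Real.continuous_exp.comp continuous_neg).continuousOn
  have hLd : ∀ y : ℝ, 0 < y → HasDerivAt L
      (((γ*y)^(2*ν) * Real.exp (-(γ*y)) * γ) * cB) y := by
    intro y hy
    have hγy : 0 < γ*y := by positivity
    have hq : HasDerivAt (fun s => ∫ t in (0:ℝ)..s, t ^ (2*ν) * Real.exp (-t))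
        ((γ*y)^(2*ν) * Real.exp (-(γ*y))) (γ*y) := by
      apply intervalIntegral.integral_hasDerivAt_right (hInt _)
      · exact ContinuousAt.stronglyMeasurableAtFilter isOpen_Ioi
          (fun z hz => ContinuousAt.mul
            (Real.continuousAt_rpow_const _ _ (Or.inl (ne_of_gt hz)))
            (Real.continuous_exp.comp continuous_neg).continuousAt) (γ*y) hγy
      · exact ContinuousAt.mul
          (Real.continuousAt_rpow_const _ _ (Or.inl (ne_of_gt hγy)))
          (Real.continuous_exp.comp continuous_neg).continuousAt
    have hlin : HasDerivAt (fun y : ℝ => γ*y) γ y := by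
      simpa using (hasDerivAt_id y).const_mul γ
    have := (hq.comp y hlin).mul_const cB
    exact this
  -- derivative of Φ on (0, x)
  have hΦd : ∀ y : ℝ, 0 < y → HasDerivAt Φ
      (Real.exp (-γ*y) * (γ * y^(2*ν) * (gf ν y - y * gf (ν+1) y)
        - 2*ν * y^(2*ν-1) * (gf ν y - gc ν 0))) y := by
    intro y hy
    have h := (((hJd y).const_mul (1-γ)).sub (hAd y hy)).add (hLd y hy)
    refine h.congr_deriv (Eq.symm ?_)
    have hmul : (γ*y)^(2*ν) = γ^(2*ν) * y^(2*ν) := Real.mul_rpow hγ0.le hy.le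
    have hng : -(γ*y) = -γ*y := by ring
    have hcBe : γ^(2*ν) * γ * cB = γ * gc ν 0 := by
      rw [hcB, gc_zero_eq]
      field_simp
    have hsplit : y ^ (2*ν+1) = y^(2*ν) * y := by
      rw [Real.rpow_add hy, Real.rpow_one]
    rw [hft]
    simp only []
    rw [hmul, hng, hsplit]
    linear_combination (-(Real.exp (-γ*y) * y^(2*ν))) * hcBe
  -- positivity of the derivative on (0, ∞)
  have hΦpos : ∀ y : ℝ, 0 < y →
      0 < Real.exp (-γ*y) * (γ * y^(2*ν) * (gf ν y - y * gf (ν+1) y)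
        - 2*ν * y^(2*ν-1) * (gf ν y - gc ν 0)) := by
    intro y hy
    have hw := gf_w_pos hν1 hy
    have hT : 0 ≤ gf ν y - gc ν 0 := by
      rw [gf_sub hν1 y]
      have : 0 ≤ ∑' k : ℕ, gc ν (k+1) * y^(2*k) := by
        apply tsum_nonneg
        intro k
        have := gc_pos (show (-1:ℝ) < ν by linarith) (k+1)
        have h2 : (0:ℝ) ≤ y^(2*k) := by positivity
        positivity
      nlinarith
    have hyp : (0:ℝ) < y^(2*ν) := Real.rpow_pos_of_pos hy _
    have hyp2 : (0:ℝ) < y^(2*ν-1) := Real.rpow_pos_of_pos hy _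
    have he : (0:ℝ) < Real.exp (-γ*y) := Real.exp_pos _
    have hterm1 : 0 < γ * y^(2*ν) * (gf ν y - y * gf (ν+1) y) := by
      apply mul_pos (mul_pos hγ0 hyp)
      linarith
    have hterm2 : 0 ≤ -(2*ν) * (y^(2*ν-1) * (gf ν y - gc ν 0)) := by
      apply mul_nonneg (by linarith) (mul_nonneg hyp2.le hT)
    apply mul_pos he
    nlinarith
  -- values at 0
  have hAa0 : Aa 0 = 0 := by
    rw [hAa]
    simp [gf_zero]
  have hL0 : L 0 = 0 := by
    rw [hL]
    simp
  have hJ0 : J 0 = 0 := by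
    rw [hJ]
    simp
  have hΦ0 : Φ 0 = 0 := by
    rw [hΦdef]
    simp only []
    rw [hJ0, hAa0, hL0]
    ring
  -- squeeze for continuity of Aa at 0
  have hTsum : ∀ y : ℝ, gf ν y - gc ν 0 = y^2 * ∑' k : ℕ, gc ν (k+1) * y^(2*k) := by
    intro y
    have := gf_sub hν1 y
    linarith
  set M : ℝ := ∑' k : ℕ, gc ν (k+1) * x^(2*k) with hM
  have hTnn : ∀ y : ℝ, 0 ≤ ∑' k : ℕ, gc ν (k+1) * y^(2*k) := by
    intro y
    apply tsum_nonneg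
    intro k
    have := gc_pos (show (-1:ℝ) < ν by linarith) (k+1)
    have h2 : (0:ℝ) ≤ y^(2*k) := by rw [pow_mul]; positivity
    positivity
  have hTbound : ∀ y ∈ Set.Icc (0:ℝ) x, (∑' k : ℕ, gc ν (k+1) * y^(2*k)) ≤ M := by
    intro y hy
    apply Summable.tsum_le_tsum _ (summable_gf_shift hν1 y) (summable_gf_shift hν1 x)
    intro k
    have h1 : y^(2*k) ≤ x^(2*k) := pow_le_pow_left₀ hy.1 hy.2 _
    exact mul_le_mul_of_nonneg_left h1 (gc_pos (show (-1:ℝ) < ν by linarith) (k+1)).le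
  have hMnn : 0 ≤ M := hTnn x
  have hrpow_split : ∀ y : ℝ, 0 < y → y^(2*ν) * y^2 = y^(2*ν+2) := by
    intro y hy
    rw [show (y:ℝ)^(2:ℕ) = y^((2:ℕ):ℝ) from (Real.rpow_natCast y 2).symm,
      ← Real.rpow_add hy]
    norm_num
  have hAa_lower : ∀ y ∈ Set.Icc (0:ℝ) x, 0 ≤ Aa y := by
    intro y hy
    rw [hAa]
    simp only []
    rcases eq_or_lt_of_le hy.1 with h0 | hpos
    · rw [← h0]
      simp [gf_zero]
    · have h1 : (0:ℝ) ≤ y^(2*ν) := (Real.rpow_pos_of_pos hpos _).le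
      have h2 : 0 ≤ gf ν y - gc ν 0 := by
        rw [hTsum y]
        have := hTnn y
        positivity
      positivity
  have hAa_upper : ∀ y ∈ Set.Icc (0:ℝ) x, Aa y ≤ y^(2*ν+2) * M := by
    intro y hy
    rw [hAa]
    simp only []
    rcases eq_or_lt_of_le hy.1 with h0 | hpos
    · rw [← h0]
      rw [Real.zero_rpow (by linarith : (2*ν+2:ℝ) ≠ 0)]
      simp [gf_zero]
    · have hynn := hpos.le
      have hexple : Real.exp (-γ*y) ≤ 1 := by
        rw [Real.exp_le_one_iff]
        nlinarith
      have h1 : (0:ℝ) < y^(2*ν) := Real.rpow_pos_of_pos hpos _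
      have h2 : 0 ≤ gf ν y - gc ν 0 := by
        rw [hTsum y]
        have := hTnn y
        positivity
      calc Real.exp (-γ*y) * (y ^ (2*ν) * (gf ν y - gc ν 0))
          ≤ 1 * (y ^ (2*ν) * (gf ν y - gc ν 0)) := by
            apply mul_le_mul_of_nonneg_right hexple
            positivity
        _ = y ^ (2*ν) * (y^2 * (∑' k : ℕ, gc ν (k+1) * y^(2*k))) := by
            rw [one_mul, hTsum y]
        _ ≤ y ^ (2*ν) * (y^2 * M) := by
            apply mul_le_mul_of_nonneg_left _ h1.le
            apply mul_le_mul_of_nonneg_left (hTbound y hy) (by positivity)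
        _ = y^(2*ν+2) * M := by rw [← hrpow_split y hpos]; ring
  have hAacont0 : ContinuousWithinAt Aa (Set.Icc 0 x) 0 := by
    rw [ContinuousWithinAt, hAa0]
    have htend : Filter.Tendsto (fun y : ℝ => y^(2*ν+2) * M) (nhdsWithin 0 (Set.Icc 0 x)) (nhds 0) := by
      have hc : ContinuousAt (fun y : ℝ => y^(2*ν+2)) 0 :=
        Real.continuousAt_rpow_const 0 _ (Or.inr (by linarith))
      have h0 : (0:ℝ)^(2*ν+2:ℝ) = 0 := Real.zero_rpow (by linarith)
      have h1 : Filter.Tendsto (fun y : ℝ => y^(2*ν+2)) (nhdsWithin 0 (Set.Icc 0 x))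
          (nhds ((0:ℝ)^(2*ν+2:ℝ))) := (hc.continuousWithinAt).tendsto
      have h2 := h1.mul_const M
      rw [h0, zero_mul] at h2
      exact h2
    apply tendsto_of_tendsto_of_tendsto_of_le_of_le' tendsto_const_nhds htend
    · exact Filter.eventually_iff_exists_mem.mpr ⟨Set.Icc 0 x, self_mem_nhdsWithin, hAa_lower⟩
    · exact Filter.eventually_iff_exists_mem.mpr ⟨Set.Icc 0 x, self_mem_nhdsWithin, hAa_upper⟩
  -- continuity of L on Icc
  have hLcont : ContinuousOn L (Set.Icc 0 x) := by
    have hq : ContinuousOn (fun s => ∫ t in (0:ℝ)..s, t^(2*ν) * Real.exp (-t))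
        (Set.uIcc 0 (γ*x)) :=
      intervalIntegral.continuousOn_primitive_interval' (hInt (γ*x)) Set.left_mem_uIcc
    rw [hL]
    apply ContinuousOn.mul _ continuousOn_const
    apply hq.comp ((continuous_const.mul continuous_id).continuousOn)
    intro y hy
    rw [Set.uIcc_of_le (by positivity : (0:ℝ) ≤ γ*x)]
    constructor
    · have := hy.1
      exact mul_nonneg hγ0.le this
    · exact mul_le_mul_of_nonneg_left hy.2 hγ0.le
  -- continuity of Φ on Icc
  have hΦcont : ContinuousOn Φ (Set.Icc 0 x) := by
    intro y hy
    rcases eq_or_lt_of_le hy.1 with h0 | hpos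
    · rw [← h0] at hy ⊢
      rw [hΦdef]
      exact ((((hJd 0).continuousAt.continuousWithinAt).const_smul (1-γ)).sub hAacont0).add
        ((hLcont 0 hy))
    · rw [hΦdef]
      exact ((((hJd y).continuousAt.continuousWithinAt).const_smul (1-γ)).sub
        ((hAd y hpos).continuousAt.continuousWithinAt)).add
        ((hLd y hpos).continuousAt.continuousWithinAt)
  -- strict monotonicity
  have hmono : StrictMonoOn Φ (Set.Icc 0 x) := by
    apply strictMonoOn_of_deriv_pos (convex_Icc 0 x) hΦcont
    intro y hy
    rw [interior_Icc] at hy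
    rw [(hΦd y hy.1).deriv]
    exact hΦpos y hy.1
  have hΦx : 0 < Φ x := by
    have := hmono (Set.left_mem_Icc.mpr hx.le) (Set.right_mem_Icc.mpr hx.le) hx
    rw [hΦ0] at this
    exact this
  have hΦxx : 0 < (1-γ) * J x - Aa x + L x := hΦx
  -- rewrite goal pieces
  have hIeq : (∫ t in (0:ℝ)..x, Real.exp (-γ * t) * t ^ ν * besselI (ν + 1) t) = J x := by
    rw [hJ]
    apply intervalIntegral.integral_congr
    intro t ht
    rw [Set.uIcc_of_le hx.le] at ht
    show Real.exp (-γ * t) * t ^ ν * besselI (ν + 1) t = ft t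
    rw [hft]
    simp only []
    rcases eq_or_lt_of_le ht.1 with h0 | hpos
    · rw [← h0]
      rw [besselI_zero (by linarith : (0:ℝ) < ν + 1)]
      rw [Real.zero_rpow (by linarith : (2*ν+1:ℝ) ≠ 0)]
      ring
    · rw [besselI_eq_s17 hνa hpos]
      have hsplit3 : t^(ν:ℝ) * t^(ν+1:ℝ) = t^(2*ν+1:ℝ) := by
        rw [← Real.rpow_add hpos]
        ring_nf
      linear_combination (Real.exp (-γ*t) * gf (ν+1) t) * hsplit3
  have hx2 : x^(ν:ℝ) * x^(ν:ℝ) = x^(2*ν) := by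
    rw [← Real.rpow_add hx]
    ring_nf
  have hAeq : Real.exp (-γ * x) * x ^ ν * (besselI ν x - x ^ ν / (Real.Gamma (ν + 1) * 2 ^ ν))
      = Aa x := by
    rw [hAa]
    simp only []
    rw [besselI_eq_s17 hν1 hx, gc_zero_eq]
    have hc : x ^ ν / (Real.Gamma (ν + 1) * 2 ^ ν) = x ^ ν * (1 / (Real.Gamma (ν+1) * 2^(ν:ℝ))) := by
      ring
    rw [hc]
    linear_combination (Real.exp (-γ*x) * (gf ν x - 1 / (Real.Gamma (ν+1) * 2^(ν:ℝ)))) * hx2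
  have hBeq : lowerIncGamma (2 * ν + 1) (γ * x) / (Real.Gamma (ν + 1) * 2 ^ ν * γ ^ (2 * ν))
      = L x := by
    rw [hL]
    simp only []
    unfold lowerIncGamma
    rw [show (2*ν+1-1 : ℝ) = 2*ν by ring, hcB]
    rw [div_eq_mul_inv, one_div]
  rw [gt_iff_lt, hIeq, hAeq, hBeq]
  rw [show (1:ℝ)/(1-γ) * (Aa x - L x) = (Aa x - L x) / (1-γ) by ring]
  rw [div_lt_iff₀ h1γ]
  nlinarith [hΦxx]
end
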